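/- arXiv:math/0210045 — 5 statements merged into one kernel-verified Lean document; each statement's English description precedes it below -/
import Mathlib

section
/- The reduced Euler characteristic of the sparse complex on {1,...,2n} (no two consecutive vertices in a face) equals −1 if n ≡ 0 (mod 3), equals +1 if n ≡ 1 (mod 3), and equals 0 if n ≡ 2 (mod 3). -/
/-- A face of the sparse complex on `{1,...,m}`: a subset with no two consecutive integers. -/
def SparseFace (m : ℕ) (σ : Finset ℕ) : Prop :=
  σ ⊆ Finset.Icc 1 m ∧ ∀ i : ℕ, ¬(i ∈ σ ∧ i + 1 ∈ σ)

/-- Decidable version of `SparseFace`. -/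
def SparseDec (m : ℕ) (σ : Finset ℕ) : Prop :=
  σ ⊆ Finset.Icc 1 m ∧ ∀ i ∈ Finset.Icc 1 m, ¬(i ∈ σ ∧ i + 1 ∈ σ)

instance (m : ℕ) : DecidablePred (SparseDec m) := fun σ => by
  unfold SparseDec; infer_instance

lemma sparse_iff (m : ℕ) (σ : Finset ℕ) : SparseFace m σ ↔ SparseDec m σ := by
  constructor
  · rintro ⟨h1, h2⟩
    exact ⟨h1, fun i _ => h2 i⟩
  · rintro ⟨h1, h2⟩
    refine ⟨h1, fun i hi => ?_⟩
    exact h2 i (h1 hi.1) hi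

/-- The faces of the sparse complex on `{1,...,m}` as a `Finset`. -/
def Fm (m : ℕ) : Finset (Finset ℕ) :=
  (Finset.Icc 1 m).powerset.filter (fun σ => SparseDec m σ)

lemma mem_Fm {m : ℕ} {σ : Finset ℕ} : σ ∈ Fm m ↔ SparseFace m σ := by
  simp only [Fm, Finset.mem_filter, Finset.mem_powerset, sparse_iff]
  exact ⟨fun h => h.2, fun h => ⟨h.1, h⟩⟩

/-- Euler-type alternating sum over faces. -/
def H (m : ℕ) : ℤ := ∑ σ ∈ Fm m, (-1 : ℤ) ^ σ.card

lemma H_rec (m : ℕ) : H (m + 2) = H (m + 1) - H m := by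
  unfold H
  rw [← Finset.sum_filter_add_sum_filter_not (Fm (m + 2)) (fun σ => (m + 2) ∈ σ)]
  have hA : (Fm (m + 2)).filter (fun σ => (m + 2) ∉ σ) = Fm (m + 1) := by
    ext σ
    simp only [Finset.mem_filter, mem_Fm]
    constructor
    · rintro ⟨⟨hsub, hsp⟩, hnot⟩
      refine ⟨fun x hx => ?_, hsp⟩
      have h1 := hsub hx
      rw [Finset.mem_Icc] at h1 ⊢
      have : x ≠ m + 2 := fun h => hnot (h ▸ hx)
      omega
    · rintro ⟨hsub, hsp⟩
      have hni : (m + 2) ∉ σ := fun h => by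
        have := hsub h; rw [Finset.mem_Icc] at this; omega
      refine ⟨⟨fun x hx => ?_, hsp⟩, hni⟩
      have := hsub hx; rw [Finset.mem_Icc] at this ⊢; omega
  have hB : (∑ σ ∈ (Fm (m + 2)).filter (fun σ => (m + 2) ∈ σ), (-1 : ℤ) ^ σ.card)
      = -(∑ σ ∈ Fm m, (-1 : ℤ) ^ σ.card) := by
    rw [← Finset.sum_neg_distrib]
    refine Finset.sum_bij' (fun σ _ => σ.erase (m + 2)) (fun τ _ => insert (m + 2) τ)
      ?_ ?_ ?_ ?_ ?_
    · -- erase lands in Fm m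
      intro σ hσ
      rw [Finset.mem_filter, mem_Fm] at hσ
      obtain ⟨⟨hsub, hsp⟩, hmem⟩ := hσ
      rw [mem_Fm]
      constructor
      · intro x hx
        rw [Finset.mem_erase] at hx
        obtain ⟨hne, hxσ⟩ := hx
        have hx2 := hsub hxσ
        rw [Finset.mem_Icc] at hx2 ⊢
        have : x ≠ m + 1 := by
          rintro rfl
          exact hsp (m + 1) ⟨hxσ, hmem⟩
        omega
      · intro i hi
        exact hsp i ⟨Finset.erase_subset _ _ hi.1, Finset.erase_subset _ _ hi.2⟩
    · -- insert lands in filtered set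
      intro τ hτ
      rw [mem_Fm] at hτ
      obtain ⟨hsub, hsp⟩ := hτ
      rw [Finset.mem_filter, mem_Fm]
      refine ⟨⟨?_, ?_⟩, Finset.mem_insert_self _ _⟩
      · intro x hx
        rw [Finset.mem_insert] at hx
        rcases hx with rfl | hx
        · rw [Finset.mem_Icc]; omega
        · have := hsub hx; rw [Finset.mem_Icc] at this ⊢; omega
      · intro i hi
        obtain ⟨h1, h2⟩ := hi
        rw [Finset.mem_insert] at h1 h2
        rcases h1 with rfl | h1
        · rcases h2 with h2 | h2
          · omega
          · have := hsub h2; rw [Finset.mem_Icc] at this; omega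
        · rcases h2 with h2 | h2
          · have := hsub h1; rw [Finset.mem_Icc] at this; omega
          · exact hsp i ⟨h1, h2⟩
    · -- left inverse
      intro σ hσ
      rw [Finset.mem_filter] at hσ
      exact Finset.insert_erase hσ.2
    · -- right inverse
      intro τ hτ
      rw [mem_Fm] at hτ
      apply Finset.erase_insert
      intro h
      have := hτ.1 h
      rw [Finset.mem_Icc] at this; omega
    · -- values
      intro σ hσ
      rw [Finset.mem_filter] at hσ
      rw [Finset.card_erase_of_mem hσ.2]
      have hpos : 1 ≤ σ.card := Finset.card_pos.mpr ⟨m + 2, hσ.2⟩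
      obtain ⟨k, hk⟩ : ∃ k, σ.card = k + 1 := ⟨σ.card - 1, by omega⟩
      rw [hk]
      simp [pow_succ]
  rw [hA, hB]
  ring

lemma H_three (m : ℕ) : H (m + 3) = -H m := by
  have h1 := H_rec m
  have h2 := H_rec (m + 1)
  have e1 : m + 1 + 2 = m + 3 := by omega
  have e2 : m + 1 + 1 = m + 2 := by omega
  rw [e1, e2] at h2
  linarith

lemma H_six (m : ℕ) : H (m + 6) = H m := by
  have h1 := H_three m
  have h2 := H_three (m + 3)
  have e : m + 3 + 3 = m + 6 := by omega
  rw [e] at h2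
  rw [h2, h1, neg_neg]

lemma H_period (q r : ℕ) : H (6 * q + r) = H r := by
  induction q with
  | zero => simp
  | succ q ih =>
    have e : 6 * (q + 1) + r = (6 * q + r) + 6 := by ring
    rw [e, H_six, ih]

lemma H0 : H 0 = 1 := by decide
lemma H2 : H 2 = -1 := by decide
lemma H4 : H 4 = 0 := by decide

open Classical in
/-- The reduced Euler characteristic `χ̃ = -∑_{σ face} (-1)^{|σ|}` of the sparse complex
on `{1,...,2n}` is `-1, +1, 0` according to `n ≡ 0, 1, 2 (mod 3)`. -/
theorem stmt3 (n : ℕ) :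
    -(∑ σ ∈ (Finset.Icc 1 (2 * n)).powerset.filter (fun σ => SparseFace (2 * n) σ),
        (-1 : ℤ) ^ σ.card) =
      if n % 3 = 0 then -1 else if n % 3 = 1 then 1 else 0 := by
  have key : (∑ σ ∈ (Finset.Icc 1 (2 * n)).powerset.filter (fun σ => SparseFace (2 * n) σ),
      (-1 : ℤ) ^ σ.card) = H (2 * n) := by
    unfold H Fm
    congr 1
    exact Finset.filter_congr fun σ _ => sparse_iff (2 * n) σ
  rw [key]
  have e : 2 * n = 6 * (n / 3) + 2 * (n % 3) := by omega
  rw [e, H_period]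
  have h3 : n % 3 < 3 := Nat.mod_lt _ (by omega)
  interval_cases h : n % 3 <;> simp [H0, H2, H4]
end

section
/- For the partition λ = (3, 1^t) of n = t + 3, the simplicial complex δ_λ is isomorphic to the complex on vertex set {1,...,t+2} whose maximal simplices are exactly the sets {1,...,t+2} \ {i, i+1} for i = 1,...,t+1; i.e., a subset σ ⊆ {1,...,t+2} is a face iff there exists i with 1 ≤ i ≤ t+1 and i ∉ σ and i+1 ∉ σ. -/
/-- `l` is a composition of `n`: a tuple of positive integers summing to `n`. -/
def IsComp (n : ℕ) (l : List ℕ) : Prop := (∀ x ∈ l, 0 < x) ∧ l.sum = n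

/-- Refinement order on compositions: `x ≤ y` iff the parts of `x` are the sums of
consecutive (nonempty) blocks of the parts of `y`. -/
def CompLE (x y : List ℕ) : Prop :=
  ∃ L : List (List ℕ), (∀ b ∈ L, b ≠ []) ∧ L.flatten = y ∧ L.map List.sum = x

namespace Stmt8

/-- sums of nonempty prefixes -/
def fsums : List ℕ → Finset ℕ
  | [] => ∅
  | a :: l => insert a ((fsums l).image (a + ·))

lemma mem_fsums_pos : ∀ (l : List ℕ), (∀ z ∈ l, 0 < z) → ∀ s ∈ fsums l, 0 < s := by
  intro l
  induction l with
  | nil => simp [fsums]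
  | cons a tl ih =>
    intro hl s hs
    simp only [fsums, Finset.mem_insert, Finset.mem_image] at hs
    rcases hs with rfl | ⟨b, _, rfl⟩
    · exact hl s (by simp)
    · have := hl a (by simp); omega

lemma mem_fsums_le : ∀ (l : List ℕ), ∀ s ∈ fsums l, s ≤ l.sum := by
  intro l
  induction l with
  | nil => simp [fsums]
  | cons a tl ih =>
    intro s hs
    simp only [fsums, Finset.mem_insert, Finset.mem_image] at hs
    rcases hs with rfl | ⟨b, hb, rfl⟩
    · simp
    · have := ih b hb; simp; omega

lemma sum_mem_fsums : ∀ (l : List ℕ), l ≠ [] → l.sum ∈ fsums l := by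
  intro l
  induction l with
  | nil => simp
  | cons a tl ih =>
    intro _
    rcases eq_or_ne tl [] with rfl | h
    · simp [fsums]
    · have := ih h
      simp only [fsums, List.sum_cons, Finset.mem_insert, Finset.mem_image]
      exact Or.inr ⟨tl.sum, this, rfl⟩

lemma fsums_append : ∀ (l1 l2 : List ℕ),
    fsums (l1 ++ l2) = fsums l1 ∪ (fsums l2).image (l1.sum + ·) := by
  intro l1 l2
  induction l1 with
  | nil =>
    have : ((0:ℕ) + ·) = id := funext fun x => Nat.zero_add x
    simp [fsums, this]
  | cons a tl ih =>
    simp only [List.cons_append, fsums, List.sum_cons, List.append_eq]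
    rw [ih]
    ext x
    simp only [Finset.mem_insert, Finset.mem_union, Finset.mem_image]
    constructor
    · rintro (rfl | ⟨b, hb | ⟨c, hc, rfl⟩, rfl⟩)
      · exact Or.inl (Or.inl rfl)
      · exact Or.inl (Or.inr ⟨b, hb, rfl⟩)
      · exact Or.inr ⟨c, hc, by omega⟩
    · rintro ((rfl | ⟨b, hb, rfl⟩) | ⟨c, hc, rfl⟩)
      · exact Or.inl rfl
      · exact Or.inr ⟨b, Or.inl hb, rfl⟩
      · exact Or.inr ⟨tl.sum + c, Or.inr ⟨c, hc, rfl⟩, by omega⟩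

lemma fsums_eq_empty : ∀ (l : List ℕ), fsums l = ∅ ↔ l = [] := by
  intro l
  cases l with
  | nil => simp [fsums]
  | cons a tl => simp [fsums]

/-- split characterization of membership -/
lemma mem_fsums_iff (s : ℕ) (y : List ℕ) :
    s ∈ fsums y ↔ ∃ y1 y2 : List ℕ, y = y1 ++ y2 ∧ y1 ≠ [] ∧ y1.sum = s := by
  constructor
  · induction y generalizing s with
    | nil => simp [fsums]
    | cons a tl ih =>
      intro hs
      simp only [fsums, Finset.mem_insert, Finset.mem_image] at hs
      rcases hs with rfl | ⟨b, hb, rfl⟩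
      · exact ⟨[s], tl, rfl, by simp, by simp⟩
      · obtain ⟨y1, y2, rfl, h1, h2⟩ := ih b hb
        exact ⟨a :: y1, y2, rfl, by simp, by simp [h2]⟩
  · rintro ⟨y1, y2, rfl, h1, rfl⟩
    rw [fsums_append]
    exact Finset.mem_union_left _ (sum_mem_fsums _ h1)

lemma head_le_mem (a : ℕ) (l : List ℕ) : ∀ s ∈ fsums (a :: l), a ≤ s := by
  intro s hs
  simp only [fsums, Finset.mem_insert, Finset.mem_image] at hs
  rcases hs with rfl | ⟨b, _, rfl⟩ <;> omega

lemma fsums_flatten_subset : ∀ (L : List (List ℕ)), (∀ b ∈ L, b ≠ []) →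
    fsums (L.map List.sum) ⊆ fsums L.flatten := by
  intro L
  induction L with
  | nil => simp
  | cons l L ih =>
    intro hb
    simp only [List.map_cons, List.flatten_cons, fsums, fsums_append]
    apply Finset.insert_subset
    · exact Finset.mem_union_left _ (sum_mem_fsums l (hb l (by simp)))
    · exact (Finset.image_subset_image (ih (fun b h => hb b (by simp [h])))).trans
        Finset.subset_union_right

lemma compLE_of_subset : ∀ (x y : List ℕ), (∀ z ∈ x, 0 < z) → (∀ z ∈ y, 0 < z) →
    x.sum = y.sum → fsums x ⊆ fsums y → CompLE x y := by
  intro x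
  induction x with
  | nil =>
    intro y _ hy hsum _
    have hy0 : y = [] := by
      cases y with
      | nil => rfl
      | cons b l =>
        exfalso
        have hb := hy b (by simp)
        have hl : 0 ≤ l.sum := Nat.zero_le _
        simp at hsum
        omega
    subst hy0
    exact ⟨[], by simp, by simp, by simp⟩
  | cons a xs ih =>
    intro y hx hy hsum hsub
    have ha : a ∈ fsums y := hsub (by simp [fsums])
    obtain ⟨y1, y2, rfl, h1, h2⟩ := (mem_fsums_iff a _).1 ha
    have hsub2 : fsums xs ⊆ fsums y2 := by
      intro s hs
      have hspos : 0 < s := mem_fsums_pos xs (fun z hz => hx z (by simp [hz])) s hs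
      have hmem : a + s ∈ fsums (y1 ++ y2) := hsub (by
        simp only [fsums, Finset.mem_insert, Finset.mem_image]
        exact Or.inr ⟨s, hs, rfl⟩)
      rw [fsums_append, h2] at hmem
      rcases Finset.mem_union.1 hmem with h | h
      · exfalso
        have hle := mem_fsums_le y1 _ h
        omega
      · obtain ⟨c, hc, hc2⟩ := Finset.mem_image.1 h
        have hcs : c = s := by omega
        rwa [hcs] at hc
    have hsum2 : xs.sum = y2.sum := by
      simp only [List.sum_cons, List.sum_append] at hsum
      omega
    obtain ⟨L, hL1, hL2, hL3⟩ := ih y2 (fun z hz => hx z (by simp [hz]))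
      (fun z hz => hy z (by simp [hz])) hsum2 hsub2
    refine ⟨y1 :: L, ?_, by simp [hL2], by simp [hL3, h2]⟩
    intro b hb
    rcases List.mem_cons.1 hb with rfl | h
    · exact h1
    · exact hL1 b h

lemma compLE_iff (x y : List ℕ) (hx : ∀ z ∈ x, 0 < z) (hy : ∀ z ∈ y, 0 < z)
    (hsum : x.sum = y.sum) : CompLE x y ↔ fsums x ⊆ fsums y := by
  constructor
  · rintro ⟨L, hb, rfl, rfl⟩
    exact fsums_flatten_subset L hb
  · exact compLE_of_subset x y hx hy hsum

lemma fsums_inj : ∀ (x y : List ℕ), (∀ z ∈ x, 0 < z) → (∀ z ∈ y, 0 < z) →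
    fsums x = fsums y → x = y := by
  intro x
  induction x with
  | nil =>
    intro y _ _ h
    cases y with
    | nil => rfl
    | cons b l =>
      exfalso
      have hb : b ∈ fsums (b :: l) := by simp [fsums]
      rw [← h] at hb
      simp [fsums] at hb
  | cons a xs ih =>
    intro y hx hy h
    cases y with
    | nil =>
      exfalso
      have ha : a ∈ fsums (a :: xs) := by simp [fsums]
      rw [h] at ha
      simp [fsums] at ha
    | cons b ys =>
      have hab : a = b := by
        have ha : a ∈ fsums (b :: ys) := h ▸ (by simp [fsums] : a ∈ fsums (a :: xs))
        have hb : b ∈ fsums (a :: xs) := h.symm ▸ (by simp [fsums] : b ∈ fsums (b :: ys))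
        have h1 := head_le_mem b ys a ha
        have h2 := head_le_mem a xs b hb
        omega
      subst hab
      have hn1 : a ∉ (fsums xs).image (a + ·) := by
        simp only [Finset.mem_image, not_exists]
        rintro s ⟨hs, hsa⟩
        have := mem_fsums_pos xs (fun z hz => hx z (by simp [hz])) s hs
        omega
      have hn2 : a ∉ (fsums ys).image (a + ·) := by
        simp only [Finset.mem_image, not_exists]
        rintro s ⟨hs, hsa⟩
        have := mem_fsums_pos ys (fun z hz => hy z (by simp [hz])) s hs
        omega
      have himg : (fsums xs).image (a + ·) = (fsums ys).image (a + ·) := by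
        have h' := congrArg (fun S => Finset.erase S a) h
        simp only [fsums] at h'
        simpa [Finset.erase_insert hn1, Finset.erase_insert hn2] using h'
      have heq : fsums xs = fsums ys :=
        Finset.image_injective (add_right_injective a) himg
      rw [ih ys (fun z hz => hx z (by simp [hz])) (fun z hz => hy z (by simp [hz])) heq]

def diffs : ℕ → List ℕ → List ℕ
  | _, [] => []
  | p, a :: l => (a - p) :: diffs a l

lemma diffs_pos : ∀ (s : List ℕ) (p : ℕ), List.Pairwise (· < ·) s → (∀ x ∈ s, p < x) →
    ∀ z ∈ diffs p s, 0 < z := by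
  intro s
  induction s with
  | nil => simp [diffs]
  | cons a l ih =>
    intro p hs hp z hz
    simp only [diffs, List.mem_cons] at hz
    rcases hz with rfl | h
    · have := hp a (by simp); omega
    · exact ih a (List.pairwise_cons.1 hs).2 (fun x hx => (List.pairwise_cons.1 hs).1 x hx) z h

lemma fsums_diffs : ∀ (s : List ℕ) (p : ℕ), List.Pairwise (· < ·) s → (∀ x ∈ s, p < x) →
    fsums (diffs p s) = s.toFinset.image (· - p) := by
  intro s
  induction s with
  | nil => simp [diffs, fsums]
  | cons a l ih =>
    intro p hs hp
    have hal : ∀ x ∈ l, a < x := (List.pairwise_cons.1 hs).1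
    show insert (a - p) ((fsums (diffs a l)).image ((a - p) + ·)) = _
    rw [ih a (List.pairwise_cons.1 hs).2 hal]
    ext x
    simp only [Finset.mem_insert, Finset.mem_image, List.toFinset_cons, List.mem_toFinset,
      List.mem_cons]
    constructor
    · rintro (rfl | ⟨b, ⟨c, hc, rfl⟩, rfl⟩)
      · exact ⟨a, Or.inl rfl, rfl⟩
      · have hpa := hp a (by simp)
        have hac := hal c hc
        exact ⟨c, Or.inr hc, by omega⟩
    · rintro ⟨c, rfl | hc, rfl⟩
      · exact Or.inl rfl
      · have hpa := hp a (by simp)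
        have hac := hal c hc
        exact Or.inr ⟨c - a, ⟨c, hc, rfl⟩, by omega⟩

lemma fsums_replicate (a : ℕ) : fsums (List.replicate a 1) = Finset.Icc 1 a := by
  induction a with
  | zero => simp [fsums]
  | succ n ih =>
    show insert 1 ((fsums (List.replicate n 1)).image (1 + ·)) = _
    rw [ih]
    ext x
    simp only [Finset.mem_insert, Finset.mem_image, Finset.mem_Icc]
    constructor
    · rintro (rfl | ⟨c, hc, rfl⟩) <;> omega
    · intro hx
      rcases Nat.eq_or_lt_of_le hx.1 with h | h
      · exact Or.inl h.symm
      · exact Or.inr ⟨x - 1, by omega, by omega⟩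

lemma fsums_canon (a b : ℕ) :
    fsums (List.replicate a 1 ++ 3 :: List.replicate b 1) =
      Finset.Icc 1 (a + b + 3) \ {a + 1, a + 2} := by
  rw [fsums_append, fsums_replicate]
  show Finset.Icc 1 a ∪ ((insert 3 ((fsums (List.replicate b 1)).image (3 + ·))).image
    ((List.replicate a 1).sum + ·)) = _
  rw [fsums_replicate]
  have hsum : (List.replicate a 1).sum = a := by simp [List.sum_replicate]
  rw [hsum]
  ext x
  simp only [Finset.mem_union, Finset.mem_Icc, Finset.mem_image, Finset.mem_insert,
    Finset.mem_sdiff, Finset.mem_singleton]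
  constructor
  · rintro (h | ⟨c, rfl | ⟨d, hd, rfl⟩, rfl⟩)
    · omega
    · omega
    · omega
  · rintro ⟨⟨h1, h2⟩, h3⟩
    simp only [not_or] at h3
    by_cases h : x ≤ a
    · exact Or.inl ⟨h1, h⟩
    · by_cases h' : x = a + 3
      · exact Or.inr ⟨3, Or.inl rfl, by omega⟩
      · exact Or.inr ⟨x - a, Or.inr ⟨x - a - 3, by omega, by omega⟩, by omega⟩

lemma multiset_decomp (t : ℕ) (y : List ℕ)
    (h : (↑y : Multiset ℕ) = 3 ::ₘ Multiset.replicate t 1) :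
    ∃ a b : ℕ, a + b = t ∧ y = List.replicate a 1 ++ 3 :: List.replicate b 1 := by
  have h3 : (3 : ℕ) ∈ y := by
    have : (3 : ℕ) ∈ (↑y : Multiset ℕ) := by rw [h]; exact Multiset.mem_cons_self _ _
    simpa using this
  obtain ⟨y1, y2, rfl⟩ := List.append_of_mem h3
  have hm : (y1 : Multiset ℕ) + (y2 : Multiset ℕ) = Multiset.replicate t 1 := by
    have h' : (y1 : Multiset ℕ) + (3 ::ₘ (y2 : Multiset ℕ)) = 3 ::ₘ Multiset.replicate t 1 := by
      rw [← h]; simp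
    rw [Multiset.add_cons] at h'
    rwa [Multiset.cons_inj_right] at h'
  have hy1 : y1 = List.replicate y1.length 1 := by
    apply List.eq_replicate_of_mem
    intro z hz
    have : z ∈ Multiset.replicate t 1 := by
      rw [← hm]; exact Multiset.mem_add.2 (Or.inl (by simpa using hz))
    exact Multiset.eq_of_mem_replicate this
  have hy2 : y2 = List.replicate y2.length 1 := by
    apply List.eq_replicate_of_mem
    intro z hz
    have : z ∈ Multiset.replicate t 1 := by
      rw [← hm]; exact Multiset.mem_add.2 (Or.inr (by simpa using hz))
    exact Multiset.eq_of_mem_replicate this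
  have hlen : y1.length + y2.length = t := by
    have := congrArg Multiset.card hm
    simpa using this
  exact ⟨y1.length, y2.length, hlen, by rw [← hy1, ← hy2]⟩

def toC (t : ℕ) (σ : Finset ℕ) : List ℕ := diffs 0 ((insert (t + 3) σ).sort (· ≤ ·))

lemma toC_fsums (t : ℕ) (σ : Finset ℕ) (hσ : σ ⊆ Finset.Icc 1 (t + 2)) :
    fsums (toC t σ) = insert (t + 3) σ := by
  have hmem : ∀ x ∈ insert (t + 3) σ, 0 < x := by
    intro x hx
    rcases Finset.mem_insert.1 hx with rfl | hx
    · omega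
    · have := Finset.mem_Icc.1 (hσ hx); omega
  rw [toC, fsums_diffs _ 0 (Finset.sortedLT_sort _).pairwise
    (fun x hx => hmem x ((Finset.mem_sort _).1 hx))]
  rw [Finset.sort_toFinset]
  ext x
  simp

lemma toC_pos (t : ℕ) (σ : Finset ℕ) (hσ : σ ⊆ Finset.Icc 1 (t + 2)) :
    ∀ z ∈ toC t σ, 0 < z := by
  have hmem : ∀ x ∈ insert (t + 3) σ, 0 < x := by
    intro x hx
    rcases Finset.mem_insert.1 hx with rfl | hx
    · omega
    · have := Finset.mem_Icc.1 (hσ hx); omega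
  exact diffs_pos _ 0 (Finset.sortedLT_sort _).pairwise
    (fun x hx => hmem x ((Finset.mem_sort _).1 hx))

lemma toC_isComp (t : ℕ) (σ : Finset ℕ) (hσ : σ ⊆ Finset.Icc 1 (t + 2)) :
    IsComp (t + 3) (toC t σ) := by
  refine ⟨toC_pos t σ hσ, ?_⟩
  have h1 := toC_fsums t σ hσ
  have hne : toC t σ ≠ [] := by
    intro h
    rw [h] at h1
    have : (t + 3) ∈ (∅ : Finset ℕ) := by
      show (t+3) ∈ fsums []
      rw [show fsums [] = (∅ : Finset ℕ) from rfl] at h1 ⊢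
      rw [h1]; simp
    simp at this
  have hsum_mem := sum_mem_fsums _ hne
  rw [h1] at hsum_mem
  have hM : (t + 3) ∈ fsums (toC t σ) := by rw [h1]; simp
  have hle := mem_fsums_le (toC t σ) _ hM
  rcases Finset.mem_insert.1 hsum_mem with h | h
  · exact h
  · have := Finset.mem_Icc.1 (hσ h)
    omega

lemma toF_mem (t : ℕ) (x : List ℕ)
    (h : IsComp (t + 3) x ∧ ∃ y : List ℕ, IsComp (t + 3) y ∧
      (↑y : Multiset ℕ) = 3 ::ₘ Multiset.replicate t 1 ∧ CompLE x y) :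
    (fsums x \ {t + 3}) ⊆ Finset.Icc 1 (t + 2) ∧
      ∃ i ∈ Finset.Icc 1 (t + 1), i ∉ fsums x \ {t + 3} ∧ i + 1 ∉ fsums x \ {t + 3} := by
  obtain ⟨⟨hpos, hsum⟩, y, ⟨hypos, hysum⟩, hmul, hle⟩ := h
  constructor
  · intro s hs
    obtain ⟨hs1, hs2⟩ := Finset.mem_sdiff.1 hs
    have h1 := mem_fsums_pos x hpos s hs1
    have h2 := mem_fsums_le x s hs1
    simp only [Finset.mem_singleton] at hs2
    rw [Finset.mem_Icc]
    omega
  · obtain ⟨a, b, hab, rfl⟩ := multiset_decomp t y hmul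
    have hsub : fsums x ⊆ fsums (List.replicate a 1 ++ 3 :: List.replicate b 1) := by
      obtain ⟨L, hb, hfl, hmap⟩ := hle
      rw [← hfl, ← hmap]
      exact fsums_flatten_subset L hb
    refine ⟨a + 1, by rw [Finset.mem_Icc]; omega, ?_, ?_⟩
    · intro hmem
      have h' := hsub (Finset.mem_sdiff.1 hmem).1
      rw [fsums_canon] at h'
      simp at h'
    · intro hmem
      have h' := hsub (Finset.mem_sdiff.1 hmem).1
      rw [fsums_canon] at h'
      simp at h'

lemma toC_mem (t : ℕ) (σ : Finset ℕ)
    (h : σ ⊆ Finset.Icc 1 (t + 2) ∧ ∃ i ∈ Finset.Icc 1 (t + 1), i ∉ σ ∧ i + 1 ∉ σ) :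
    IsComp (t + 3) (toC t σ) ∧ ∃ y : List ℕ, IsComp (t + 3) y ∧
      (↑y : Multiset ℕ) = 3 ::ₘ Multiset.replicate t 1 ∧ CompLE (toC t σ) y := by
  obtain ⟨hσ, i, hi, hi1, hi2⟩ := h
  have hIcc := Finset.mem_Icc.1 hi
  refine ⟨toC_isComp t σ hσ,
    List.replicate (i - 1) 1 ++ 3 :: List.replicate (t + 1 - i) 1, ⟨?_, ?_⟩, ?_, ?_⟩
  · intro z hz
    simp only [List.mem_append, List.mem_cons, List.mem_replicate] at hz
    rcases hz with ⟨_, rfl⟩ | rfl | ⟨_, rfl⟩ <;> omega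
  · simp only [List.sum_append, List.sum_cons, List.sum_replicate, smul_eq_mul, mul_one]
    omega
  · have hsplit : (i - 1) + (t + 1 - i) = t := by omega
    have hrep : Multiset.replicate t 1 =
        Multiset.replicate (i - 1) 1 + Multiset.replicate (t + 1 - i) 1 := by
      rw [← Multiset.replicate_add, hsplit]
    rw [hrep, ← Multiset.coe_add, ← Multiset.cons_coe, Multiset.coe_replicate,
      Multiset.coe_replicate, Multiset.add_cons]
  · apply compLE_of_subset
    · exact toC_pos t σ hσ
    · intro z hz
      simp only [List.mem_append, List.mem_cons, List.mem_replicate] at hz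
      rcases hz with ⟨_, rfl⟩ | rfl | ⟨_, rfl⟩ <;> omega
    · rw [(toC_isComp t σ hσ).2]
      simp only [List.sum_append, List.sum_cons, List.sum_replicate, smul_eq_mul, mul_one]
      omega
    · rw [toC_fsums t σ hσ, fsums_canon]
      intro s hs
      simp only [Finset.mem_sdiff, Finset.mem_Icc, Finset.mem_insert, Finset.mem_singleton,
        not_or]
      rcases Finset.mem_insert.1 hs with rfl | hs
      · omega
      · have h1 := Finset.mem_Icc.1 (hσ hs)
        have hne1 : s ≠ i := fun h => hi1 (h ▸ hs)
        have hne2 : s ≠ i + 1 := fun h => hi2 (h ▸ hs)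
        omega

theorem stmt8' (t : ℕ) :
    ∃ e : {x : List ℕ // IsComp (t + 3) x ∧ ∃ y : List ℕ, IsComp (t + 3) y ∧
            (↑y : Multiset ℕ) = 3 ::ₘ Multiset.replicate t 1 ∧ CompLE x y} ≃
          {σ : Finset ℕ // σ ⊆ Finset.Icc 1 (t + 2) ∧
            ∃ i ∈ Finset.Icc 1 (t + 1), i ∉ σ ∧ i + 1 ∉ σ},
      ∀ a b, CompLE a.1 b.1 ↔ (e a).1 ⊆ (e b).1 := by
  refine ⟨{
    toFun := fun x => ⟨fsums x.1 \ {t + 3}, toF_mem t x.1 x.2⟩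
    invFun := fun σ => ⟨toC t σ.1, toC_mem t σ.1 σ.2⟩
    left_inv := ?_
    right_inv := ?_ }, ?_⟩
  · intro x
    apply Subtype.ext
    have hpos := x.2.1.1
    have hsum := x.2.1.2
    have hσ : fsums x.1 \ {t + 3} ⊆ Finset.Icc 1 (t + 2) := (toF_mem t x.1 x.2).1
    show toC t (fsums x.1 \ {t + 3}) = x.1
    apply fsums_inj _ _ (toC_pos t _ hσ) hpos
    rw [toC_fsums t _ hσ]
    have hM : t + 3 ∈ fsums x.1 := by
      have hne : x.1 ≠ [] := by
        intro h
        rw [h] at hsum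
        simp at hsum
      have := sum_mem_fsums x.1 hne
      rwa [hsum] at this
    ext s
    simp only [Finset.mem_insert, Finset.mem_sdiff, Finset.mem_singleton]
    constructor
    · rintro (rfl | ⟨h, _⟩)
      · exact hM
      · exact h
    · intro hs
      by_cases h : s = t + 3
      · exact Or.inl h
      · exact Or.inr ⟨hs, h⟩
  · intro σ
    apply Subtype.ext
    show fsums (toC t σ.1) \ {t + 3} = σ.1
    rw [toC_fsums t σ.1 σ.2.1]
    have hM : (t + 3) ∉ σ.1 := by
      intro h
      have := Finset.mem_Icc.1 (σ.2.1 h)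
      omega
    ext s
    simp only [Finset.mem_sdiff, Finset.mem_insert, Finset.mem_singleton]
    constructor
    · rintro ⟨rfl | hs, hne⟩
      · exact absurd rfl hne
      · exact hs
    · intro hs
      exact ⟨Or.inr hs, fun h => hM (h ▸ hs)⟩
  · intro a b
    rw [compLE_iff a.1 b.1 a.2.1.1 b.2.1.1 (by rw [a.2.1.2, b.2.1.2])]
    show fsums a.1 ⊆ fsums b.1 ↔ fsums a.1 \ {t + 3} ⊆ fsums b.1 \ {t + 3}
    have hMb : t + 3 ∈ fsums b.1 := by
      have hne : b.1 ≠ [] := by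
        intro h
        have := b.2.1.2
        rw [h] at this
        simp at this
      have := sum_mem_fsums b.1 hne
      rwa [b.2.1.2] at this
    constructor
    · intro h s hs
      obtain ⟨h1, h2⟩ := Finset.mem_sdiff.1 hs
      exact Finset.mem_sdiff.2 ⟨h h1, h2⟩
    · intro h s hs
      by_cases hst : s = t + 3
      · exact hst ▸ hMb
      · exact (Finset.mem_sdiff.1 (h (Finset.mem_sdiff.2 ⟨hs, by simp [hst]⟩))).1

end Stmt8

/-- For `λ = (3, 1^t)` and `n = t + 3`, the poset `D_λ` of compositions of `n` lying below
some composition of type `λ` is isomorphic to the face poset (including the empty face) of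
the complex on `{1,...,t+2}` whose faces are the subsets `σ` avoiding some pair `{i, i+1}`,
`1 ≤ i ≤ t+1`; i.e. `δ_{(3,1^t)}` is isomorphic to that complex. -/
theorem stmt8 (t : ℕ) :
    ∃ e : {x : List ℕ // IsComp (t + 3) x ∧ ∃ y : List ℕ, IsComp (t + 3) y ∧
            (↑y : Multiset ℕ) = 3 ::ₘ Multiset.replicate t 1 ∧ CompLE x y} ≃
          {σ : Finset ℕ // σ ⊆ Finset.Icc 1 (t + 2) ∧
            ∃ i ∈ Finset.Icc 1 (t + 1), i ∉ σ ∧ i + 1 ∉ σ},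
      ∀ a b, CompLE a.1 b.1 ↔ (e a).1 ⊆ (e b).1 := by
  exact Stmt8.stmt8' t
end

section
/- Let K_t be the complex on {1,...,t+2} whose faces are subsets σ such that some i ∈ {1,...,t+1} satisfies i ∉ σ and i+1 ∉ σ. Then the geometric realization of K_t is homotopy equivalent to S^{2m−1} if t = 3m, to S^{2m} if t = 3m+1, and is contractible if t = 3m+2. -/
/-- A face of the complex `K_t` on `{1,...,t+2}`: a subset avoiding some pair `{i, i+1}`
with `1 ≤ i ≤ t+1` entirely. -/
def KFace (t : ℕ) (σ : Finset ℕ) : Prop :=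
  σ ⊆ Finset.Icc 1 (t + 2) ∧ ∃ i ∈ Finset.Icc 1 (t + 1), i ∉ σ ∧ i + 1 ∉ σ

/-- The geometric realization of an abstract simplicial complex given by its set of faces. -/
def geomReal {α : Type*} [DecidableEq α] (K : Set (Finset α)) : Set (α → ℝ) :=
  {w | (∀ i, 0 ≤ w i) ∧ ∃ σ ∈ K, (∀ i, w i ≠ 0 → i ∈ σ) ∧ ∑ i ∈ σ, w i = 1}

namespace Stmt9


/-- deletion of a vertex from a complex -/
def Del (K : Set (Finset ℕ)) (v : ℕ) : Set (Finset ℕ) := {σ | σ ∈ K ∧ v ∉ σ}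

/-- the mass-transfer map -/
def fmap (v w : ℕ) (c : ℝ) (x : ℕ → ℝ) : ℕ → ℝ :=
  fun i => x i + (if i = w then c else 0) - (if i = v then c else 0)

lemma sum_fmap (v w : ℕ) (c : ℝ) (x : ℕ → ℝ) (σ : Finset ℕ) (hv : v ∈ σ) (hw : w ∈ σ) :
    ∑ i ∈ σ, fmap v w c x i = ∑ i ∈ σ, x i := by
  unfold fmap
  rw [Finset.sum_sub_distrib, Finset.sum_add_distrib, Finset.sum_ite_eq' σ w (fun _ => c),
    Finset.sum_ite_eq' σ v (fun _ => c), if_pos hv, if_pos hw]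
  ring

lemma fmap_mem {K : Set (Finset ℕ)} {v w : ℕ} (hvw : v ≠ w)
    (hdom : ∀ σ ∈ K, v ∈ σ → insert w σ ∈ K)
    {x : ℕ → ℝ} (hx : x ∈ geomReal K) {t : ℝ} (ht0 : 0 ≤ t) (ht1 : t ≤ 1) :
    fmap v w (t * x v) x ∈ geomReal K := by
  obtain ⟨hpos, σ, hσ, hsupp, hsum⟩ := hx
  constructor
  · intro i
    unfold fmap
    rcases eq_or_ne i w with rfl | hiw
    · rw [if_pos rfl, if_neg (Ne.symm hvw)]
      have := hpos i; have := hpos v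
      nlinarith
    · rw [if_neg hiw]
      rcases eq_or_ne i v with rfl | hiv
      · rw [if_pos rfl]
        have := hpos i
        nlinarith
      · rw [if_neg hiv]; simpa using hpos i
  · by_cases hv : v ∈ σ
    · refine ⟨insert w σ, hdom σ hσ hv, ?_, ?_⟩
      · intro i hi
        rcases eq_or_ne i w with rfl | hiw
        · exact Finset.mem_insert_self _ _
        · refine Finset.mem_insert_of_mem ?_
          apply hsupp
          intro h0
          apply hi
          unfold fmap
          rcases eq_or_ne i v with rfl | hiv
          · simp [if_neg hiw, h0]
          · simp [if_neg hiw, if_neg hiv, h0]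
      · rw [sum_fmap v w _ x _ (Finset.mem_insert_of_mem hv) (Finset.mem_insert_self _ _)]
        by_cases hw : w ∈ σ
        · rw [Finset.insert_eq_self.mpr hw, hsum]
        · rw [Finset.sum_insert hw, hsum]
          have : x w = 0 := by
            by_contra h; exact hw (hsupp w h)
          rw [this]; ring
    · have hxv : x v = 0 := by
        by_contra h; exact hv (hsupp v h)
      have : fmap v w (t * x v) x = x := by
        funext i; unfold fmap; rw [hxv]; simp
      rw [this]
      exact ⟨σ, hσ, hsupp, hsum⟩

lemma fmap_mem_del {K : Set (Finset ℕ)} {v w : ℕ} (hvw : v ≠ w)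
    (hdown : ∀ σ ∈ K, ∀ τ, τ ⊆ σ → τ ∈ K)
    (hdom : ∀ σ ∈ K, v ∈ σ → insert w σ ∈ K)
    {x : ℕ → ℝ} (hx : x ∈ geomReal K) :
    fmap v w (x v) x ∈ geomReal (Del K v) := by
  obtain ⟨hpos, σ, hσ, hsupp, hsum⟩ := hx
  have hmem : fmap v w (1 * x v) x ∈ geomReal K := fmap_mem hvw hdom ⟨hpos, σ, hσ, hsupp, hsum⟩ zero_le_one le_rfl
  rw [one_mul] at hmem
  obtain ⟨hpos', σ', hσ', hsupp', hsum'⟩ := hmem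
  have hfv : fmap v w (x v) x v = 0 := by
    unfold fmap; rw [if_neg hvw, if_pos rfl]; ring
  refine ⟨hpos', σ'.erase v, ⟨hdown σ' hσ' _ (Finset.erase_subset _ _), Finset.notMem_erase _ _⟩, ?_, ?_⟩
  · intro i hi
    rw [Finset.mem_erase]
    refine ⟨?_, hsupp' i hi⟩
    rintro rfl; exact hi hfv
  · rw [Finset.sum_erase _ hfv, hsum']

lemma fixed_fmap {v w : ℕ} {x : ℕ → ℝ} (hxv : x v = 0) (c : ℝ) : fmap v w (c * x v) x = x := by
  funext i; unfold fmap; rw [hxv]; simp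

lemma mem_del_xv {K : Set (Finset ℕ)} {v : ℕ} {x : ℕ → ℝ} (hx : x ∈ geomReal (Del K v)) :
    x v = 0 := by
  obtain ⟨hpos, σ, ⟨hσ, hvσ⟩, hsupp, hsum⟩ := hx
  by_contra h; exact hvσ (hsupp v h)

lemma geomReal_del_subset {K : Set (Finset ℕ)} {v : ℕ} :
    geomReal (Del K v) ⊆ geomReal K := by
  rintro x ⟨hpos, σ, ⟨hσ, _⟩, hsupp, hsum⟩
  exact ⟨hpos, σ, hσ, hsupp, hsum⟩

lemma fmap_zero_c (v w : ℕ) (x : ℕ → ℝ) : fmap v w 0 x = x := by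
  funext i; unfold fmap; simp

lemma continuous_fmap {X : Type*} [TopologicalSpace X] (v w : ℕ) {c : X → ℝ} {g : X → ℕ → ℝ}
    (hc : Continuous c) (hg : Continuous g) :
    Continuous (fun x => fmap v w (c x) (g x)) := by
  apply continuous_pi
  intro i
  unfold fmap
  have hgi : Continuous (fun x => g x i) := (continuous_apply i).comp hg
  rcases eq_or_ne i w with rfl | hiw
  · rcases eq_or_ne i v with rfl | hiv
    · simp only [eq_self_iff_true, if_true]; fun_prop
    · simp only [eq_self_iff_true, if_true, if_neg hiv]; fun_prop
  · rcases eq_or_ne i v with rfl | hiv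
    · simp only [eq_self_iff_true, if_true, if_neg hiw]; fun_prop
    · simp only [if_neg hiw, if_neg hiv]; fun_prop

/-- The fold lemma : if `v` is dominated by `w` in the downward-closed complex `K`, then
`|K|` is homotopy equivalent to `|K - v|`. -/
noncomputable def foldEquiv (K : Set (Finset ℕ)) (v w : ℕ) (hvw : v ≠ w)
    (hdown : ∀ σ ∈ K, ∀ τ, τ ⊆ σ → τ ∈ K)
    (hdom : ∀ σ ∈ K, v ∈ σ → insert w σ ∈ K) :
    ContinuousMap.HomotopyEquiv ↥(geomReal K) ↥(geomReal (Del K v)) where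
  toFun := ⟨fun x => ⟨fmap v w ((x : ℕ → ℝ) v) x, fmap_mem_del hvw hdown hdom x.2⟩,
    Continuous.subtype_mk (continuous_fmap v w
      ((continuous_apply v).comp continuous_subtype_val) continuous_subtype_val) _⟩
  invFun := ⟨fun y => ⟨(y : ℕ → ℝ), geomReal_del_subset y.2⟩,
    Continuous.subtype_mk continuous_subtype_val _⟩
  left_inv := by
    refine ⟨ContinuousMap.Homotopy.symm ?_⟩
    refine ⟨⟨fun p => ⟨fmap v w (((p.1 : ℝ)) * ((p.2 : ℕ → ℝ) v)) p.2,
      fmap_mem hvw hdom p.2.2 p.1.2.1 p.1.2.2⟩, ?_⟩, ?_, ?_⟩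
    · apply Continuous.subtype_mk
      apply continuous_fmap v w
      · exact Continuous.mul (continuous_subtype_val.comp continuous_fst)
          ((continuous_apply v).comp (continuous_subtype_val.comp continuous_snd))
      · exact continuous_subtype_val.comp continuous_snd
    · intro x
      ext i
      simp only [ContinuousMap.coe_mk, ContinuousMap.id_apply]
      rw [show ((0 : unitInterval) : ℝ) * ((x : ℕ → ℝ) v) = 0 by norm_num, fmap_zero_c]
    · intro x
      ext i
      simp only [ContinuousMap.coe_mk, ContinuousMap.comp_apply]
      rw [show ((1 : unitInterval) : ℝ) * ((x : ℕ → ℝ) v) = (x : ℕ → ℝ) v by norm_num]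
  right_inv := by
    have key : ∀ y : ↥(geomReal (Del K v)), fmap v w ((y : ℕ → ℝ) v) (y : ℕ → ℝ) = (y : ℕ → ℝ) := by
      intro y
      have h := mem_del_xv y.2
      rw [h, fmap_zero_c]
    have : (ContinuousMap.mk (fun x : ↥(geomReal K) => (⟨fmap v w ((x : ℕ → ℝ) v) x,
        fmap_mem_del hvw hdown hdom x.2⟩ : ↥(geomReal (Del K v))))
        (Continuous.subtype_mk (continuous_fmap v w
          ((continuous_apply v).comp continuous_subtype_val) continuous_subtype_val) _)).comp
        (ContinuousMap.mk (fun y : ↥(geomReal (Del K v)) => (⟨(y : ℕ → ℝ),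
          geomReal_del_subset y.2⟩ : ↥(geomReal K)))
          (Continuous.subtype_mk continuous_subtype_val _)) = ContinuousMap.id _ := by
      ext y i
      simp only [ContinuousMap.comp_apply, ContinuousMap.coe_mk, ContinuousMap.id_apply]
      rw [key y]
    rw [this]



/-- boundary of the simplex on vertex set `V` -/
def bdK (V : Finset ℕ) : Set (Finset ℕ) := {σ | σ ⊆ V ∧ σ ≠ V}

lemma mem_geomReal_bdK {V : Finset ℕ} {x : ℕ → ℝ} :
    x ∈ geomReal (bdK V) ↔
      (∀ i, 0 ≤ x i) ∧ (∀ i, i ∉ V → x i = 0) ∧ (∑ i ∈ V, x i = 1) ∧ ∃ v ∈ V, x v = 0 := by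
  constructor
  · rintro ⟨hpos, σ, ⟨hσV, hσne⟩, hsupp, hsum⟩
    have hzero : ∀ i, i ∉ V → x i = 0 := by
      intro i hi; by_contra h; exact hi (hσV (hsupp i h))
    have hsumV : ∑ i ∈ V, x i = 1 := by
      rw [← Finset.sum_subset hσV (fun i _ hiσ => by
        by_contra h; exact hiσ (hsupp i h))]
      exact hsum
    obtain ⟨v, hv, hvσ⟩ : ∃ v ∈ V, v ∉ σ := by
      by_contra h
      push_neg at h
      exact hσne (Finset.Subset.antisymm hσV h)
    refine ⟨hpos, hzero, hsumV, v, hv, ?_⟩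
    by_contra h; exact hvσ (hsupp v h)
  · rintro ⟨hpos, hz, hsum, v, hv, hxv⟩
    refine ⟨hpos, V.erase v, ⟨Finset.erase_subset _ _, fun h => (Finset.notMem_erase v V) (by rw [h]; exact hv)⟩,
      ?_, ?_⟩
    · intro i hi
      rw [Finset.mem_erase]
      refine ⟨fun h => hi (h ▸ hxv), ?_⟩
      by_contra h; exact hi (hz i h)
    · rw [Finset.sum_erase _ hxv, hsum]

variable {d : ℕ}

/-- the linear lift of `u` into the hyperplane of sum-zero vectors -/
def yv (u : EuclideanSpace ℝ (Fin d)) : Fin (d + 1) → ℝ :=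
  Fin.snoc u (-(∑ j, u j))

lemma sum_yv (u : EuclideanSpace ℝ (Fin d)) : ∑ i, yv u i = 0 := by
  rw [Fin.sum_univ_castSucc]
  simp [yv]

lemma yv_castSucc (u : EuclideanSpace ℝ (Fin d)) (j : Fin d) : yv u j.castSucc = u j := by
  simp [yv]

lemma yv_injective : Function.Injective (yv (d := d)) := by
  intro u u' h
  ext j
  have := congrFun h j.castSucc
  rwa [yv_castSucc, yv_castSucc] at this

lemma yv_smul (c : ℝ) (u : EuclideanSpace ℝ (Fin d)) : yv (c • u) = fun i => c * yv u i := by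
  funext i
  refine Fin.lastCases ?_ ?_ i
  · simp [yv, Fin.snoc_last, Finset.mul_sum]
  · intro j
    rw [yv_castSucc]
    simp [yv_castSucc, PiLp.smul_apply, smul_eq_mul]

/-- the (scaled) gauge function -/
def mx (u : EuclideanSpace ℝ (Fin d)) : ℝ :=
  Finset.univ.sup' (Finset.univ_nonempty) (fun i => -(yv u i))

lemma le_mx (u : EuclideanSpace ℝ (Fin d)) (i : Fin (d + 1)) : -(yv u i) ≤ mx u := by
  unfold mx
  exact Finset.le_sup' (fun i => -(yv u i)) (Finset.mem_univ i)

lemma mx_pos {u : EuclideanSpace ℝ (Fin d)} (hu : u ≠ 0) : 0 < mx u := by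
  by_contra h
  push_neg at h
  have hy : ∀ i, 0 ≤ yv u i := by
    intro i
    have := le_mx u i
    linarith
  have hall : ∀ i ∈ Finset.univ, yv u i = 0 := by
    rw [← Finset.sum_eq_zero_iff_of_nonneg (fun i _ => hy i)]
    exact sum_yv u
  apply hu
  ext j
  have := hall j.castSucc (Finset.mem_univ _)
  rw [yv_castSucc] at this; simpa using this

lemma mx_smul {c : ℝ} (hc : 0 < c) (u : EuclideanSpace ℝ (Fin d)) : mx (c • u) = c * mx u := by
  unfold mx
  rw [Finset.mul₀_sup' hc.le]
  congr 1
  funext i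
  rw [yv_smul]
  ring

lemma cont_yv (i : Fin (d + 1)) : Continuous fun u : EuclideanSpace ℝ (Fin d) => yv u i := by
  refine Fin.lastCases ?_ ?_ i
  · simp only [yv, Fin.snoc_last]
    exact Continuous.neg (continuous_finset_sum _ (fun j _ => (EuclideanSpace.proj j).continuous))
  · intro j
    simp only [yv_castSucc]
    exact (EuclideanSpace.proj j).continuous

lemma cont_mx : Continuous (mx (d := d)) := by
  unfold mx
  have : ∀ (s : Finset (Fin (d+1))) (hs : s.Nonempty),
      Continuous fun u : EuclideanSpace ℝ (Fin d) => s.sup' hs (fun i => -(yv u i)) := by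
    intro s hs
    induction hs using Finset.Nonempty.cons_induction with
    | singleton i => simp only [Finset.sup'_singleton]; exact (cont_yv i).neg
    | cons i s his hs ih =>
        have : ∀ u : EuclideanSpace ℝ (Fin d),
            (Finset.cons i s his).sup' (Finset.cons_nonempty his) (fun k => -(yv u k))
            = max (-(yv u i)) (s.sup' hs (fun k => -(yv u k))) := by
          intro u
          rw [Finset.sup'_cons hs]
        simp only [this]
        exact Continuous.max ((cont_yv i).neg) ih
  exact this _ _

lemma yv_zero : yv (0 : EuclideanSpace ℝ (Fin d)) = 0 := by
  funext i
  refine Fin.lastCases ?_ ?_ i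
  · simp [yv, Fin.snoc_last]
  · intro j; rw [yv_castSucc]; rfl

section Sphere

variable (V : Finset ℕ) {d : ℕ} (h : V.card = d + 1)

/-- enumeration of the vertex set -/
def en (i : Fin (d + 1)) : ℕ := ((V.orderIsoOfFin h) i : ℕ)

lemma en_mem (i : Fin (d + 1)) : en V h i ∈ V := ((V.orderIsoOfFin h) i).2

lemma en_symm {n : ℕ} (hn : n ∈ V) : en V h ((V.orderIsoOfFin h).symm ⟨n, hn⟩) = n := by
  unfold en
  rw [OrderIso.apply_symm_apply]

lemma sum_en (f : ℕ → ℝ) : ∑ n ∈ V, f n = ∑ i, f (en V h i) := by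
  rw [← Finset.sum_coe_sort V f, ← Equiv.sum_comp (V.orderIsoOfFin h).toEquiv (fun a : ↥V => f ↑a)]
  rfl

/-- the radial map from the sphere to the boundary of the simplex -/
noncomputable def G0 (u : EuclideanSpace ℝ (Fin d)) : ℕ → ℝ := fun n =>
  if hn : n ∈ V then
    ((d : ℝ) + 1)⁻¹ + yv u ((V.orderIsoOfFin h).symm ⟨n, hn⟩) / (((d : ℝ) + 1) * mx u)
  else 0

lemma G0_en (u : EuclideanSpace ℝ (Fin d)) (i : Fin (d + 1)) :
    G0 V h u (en V h i) = ((d : ℝ) + 1)⁻¹ + yv u i / (((d : ℝ) + 1) * mx u) := by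
  unfold G0
  rw [dif_pos (en_mem V h i)]
  congr 2
  have : (⟨en V h i, en_mem V h i⟩ : ↥V) = (V.orderIsoOfFin h) i := rfl
  rw [this, OrderIso.symm_apply_apply]

lemma dplus_pos : (0 : ℝ) < (d : ℝ) + 1 := by positivity

lemma G0_mem {u : EuclideanSpace ℝ (Fin d)} (hu : u ≠ 0) : G0 V h u ∈ geomReal (bdK V) := by
  have hmx := mx_pos hu
  have hD : (0 : ℝ) < ((d : ℝ) + 1) * mx u := by positivity
  rw [mem_geomReal_bdK]
  refine ⟨?_, ?_, ?_, ?_⟩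
  · intro n
    unfold G0
    by_cases hn : n ∈ V
    · rw [dif_pos hn]
      set i := (V.orderIsoOfFin h).symm ⟨n, hn⟩
      have hle := le_mx u i
      have heq : ((d : ℝ) + 1)⁻¹ + yv u i / (((d : ℝ) + 1) * mx u)
          = (mx u + yv u i) / (((d : ℝ) + 1) * mx u) := by
        field_simp
      rw [heq]
      apply div_nonneg _ (le_of_lt hD)
      linarith
    · rw [dif_neg hn]
  · intro n hn
    unfold G0
    rw [dif_neg hn]
  · rw [sum_en V h]
    have : ∀ i, G0 V h u (en V h i) = ((d : ℝ) + 1)⁻¹ + yv u i / (((d : ℝ) + 1) * mx u) :=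
      G0_en V h u
    rw [Finset.sum_congr rfl (fun i _ => this i), Finset.sum_add_distrib, ← Finset.sum_div,
      sum_yv, Finset.sum_const]
    simp only [Finset.card_univ, Fintype.card_fin, nsmul_eq_mul, zero_div, add_zero]
    push_cast
    rw [mul_inv_cancel₀ (by positivity : ((d : ℝ) + 1) ≠ 0)]
  · obtain ⟨i0, _, hi0⟩ := Finset.exists_mem_eq_sup' (Finset.univ_nonempty) (fun i => -(yv u i))
    refine ⟨en V h i0, en_mem V h i0, ?_⟩
    rw [G0_en V h u i0]
    have hyi0 : yv u i0 = -(mx u) := by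
      have : mx u = -(yv u i0) := hi0
      linarith
    rw [hyi0]
    field_simp
    ring

lemma G0_inj {u u' : EuclideanSpace ℝ (Fin d)} (hu : ‖u‖ = 1) (hu' : ‖u'‖ = 1)
    (hG : G0 V h u = G0 V h u') : u = u' := by
  have hu0 : u ≠ 0 := fun h0 => by simp [h0] at hu
  have hu0' : u' ≠ 0 := fun h0 => by simp [h0] at hu'
  have hmx := mx_pos hu0
  have hmx' := mx_pos hu0'
  have hyy : ∀ i, yv u i = (mx u / mx u') * yv u' i := by
    intro i
    have hGi := congrFun hG (en V h i)
    rw [G0_en V h u i, G0_en V h u' i] at hGi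
    have h2 : yv u i / (((d : ℝ) + 1) * mx u) = yv u' i / (((d : ℝ) + 1) * mx u') := by
      linarith
    field_simp at h2
    have hd : ((d : ℝ) + 1) ≠ 0 := by positivity
    have h3 : yv u i * mx u' = yv u' i * mx u := by
      apply mul_left_cancel₀ hd
      linear_combination ((d : ℝ) + 1) * h2
    field_simp [hmx'.ne']
    linear_combination h3
  have huu : u = (mx u / mx u') • u' := by
    ext j
    have := hyy j.castSucc
    rw [yv_castSucc, yv_castSucc] at this
    simpa using this
  have hc : 0 < mx u / mx u' := by positivity
  have : (1 : ℝ) = mx u / mx u' := by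
    rw [huu, norm_smul] at hu
    rw [hu'] at hu
    rw [Real.norm_eq_abs, abs_of_pos hc, mul_one] at hu
    exact hu.symm
  rw [huu, ← this, one_smul]

lemma G0_surj {x : ℕ → ℝ} (hx : x ∈ geomReal (bdK V)) :
    ∃ u : EuclideanSpace ℝ (Fin d), ‖u‖ = 1 ∧ G0 V h u = x := by
  rw [mem_geomReal_bdK] at hx
  obtain ⟨hpos, hz, hsum, v, hv, hxv⟩ := hx
  set a : ℝ := ((d : ℝ) + 1)⁻¹ with ha
  have ha0 : 0 < a := by rw [ha]; positivity
  set y' : Fin (d + 1) → ℝ := fun i => x (en V h i) - a with hy'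
  have sum_y' : ∑ i, y' i = 0 := by
    rw [hy']
    rw [Finset.sum_sub_distrib, ← sum_en V h x, hsum, Finset.sum_const]
    simp only [Finset.card_univ, Fintype.card_fin, nsmul_eq_mul, ha]
    push_cast
    rw [mul_inv_cancel₀ (by positivity : ((d : ℝ) + 1) ≠ 0)]
    ring
  set z : EuclideanSpace ℝ (Fin d) := WithLp.toLp 2 (fun j : Fin d => y' j.castSucc) with hzdef
  have hyz : yv z = y' := by
    funext i
    refine Fin.lastCases ?_ ?_ i
    · show yv z (Fin.last d) = _
      have : yv z (Fin.last d) = -(∑ j, z j) := by simp [yv, Fin.snoc_last]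
      rw [this]
      have hsplit : ∑ i, y' i = (∑ j : Fin d, y' j.castSucc) + y' (Fin.last d) :=
        Fin.sum_univ_castSucc (f := y')
      rw [sum_y'] at hsplit
      have : ∑ j : Fin d, z j = ∑ j : Fin d, y' j.castSucc := rfl
      rw [this]
      linarith
    · intro j
      rw [yv_castSucc]
  -- index of the zero coordinate
  set i0 := (V.orderIsoOfFin h).symm ⟨v, hv⟩ with hi0def
  have hyi0 : y' i0 = -a := by
    rw [hy']
    simp only
    rw [en_symm V h hv, hxv]
    ring
  have hy'ne : y' ≠ 0 := by
    intro h0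
    rw [h0] at hyi0
    simp at hyi0
    linarith
  have hz0 : z ≠ 0 := by
    intro h0
    rw [h0, yv_zero] at hyz
    exact hy'ne hyz.symm
  have hnz : (0 : ℝ) < ‖z‖ := norm_pos_iff.mpr hz0
  refine ⟨‖z‖⁻¹ • z, norm_smul_inv_norm hz0, ?_⟩
  have hyu : yv (‖z‖⁻¹ • z) = fun i => ‖z‖⁻¹ * y' i := by
    rw [yv_smul]
    funext i
    rw [hyz]
  have hmxz : mx z = a := by
    unfold mx
    apply le_antisymm
    · apply Finset.sup'_le
      intro i _
      rw [hyz, hy']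
      simp only
      have := hpos (en V h i)
      linarith
    · have h1 : -(yv z i0) = a := by
        rw [congrFun hyz i0, hyi0]; ring
      have h2 := Finset.le_sup' (fun i => -(yv z i)) (Finset.mem_univ i0)
      rw [h1] at h2
      exact h2
  have hmxu : mx (‖z‖⁻¹ • z) = ‖z‖⁻¹ * a := by
    rw [mx_smul (by positivity) z, hmxz]
  funext n
  unfold G0
  by_cases hn : n ∈ V
  · rw [dif_pos hn]
    rw [hmxu]
    have hcoord : yv (‖z‖⁻¹ • z) ((V.orderIsoOfFin h).symm ⟨n, hn⟩)
        = ‖z‖⁻¹ * y' ((V.orderIsoOfFin h).symm ⟨n, hn⟩) := congrFun hyu _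
    rw [hcoord]
    have : y' ((V.orderIsoOfFin h).symm ⟨n, hn⟩) = x n - a := by
      rw [hy']
      simp only
      rw [en_symm V h hn]
    rw [this]
    have hane : ((d : ℝ) + 1) ≠ 0 := by positivity
    have hza : ‖z‖⁻¹ ≠ 0 := by positivity
    field_simp [ha]
    rw [ha]; linear_combination (-(x n)) * (mul_inv_cancel₀ hane)
  · rw [dif_neg hn]
    exact (hz n hn).symm

lemma cont_G0 : Continuous fun U : ↥(Metric.sphere (0 : EuclideanSpace ℝ (Fin d)) 1) =>
    G0 V h (U : EuclideanSpace ℝ (Fin d)) := by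
  have hne : ∀ U : ↥(Metric.sphere (0 : EuclideanSpace ℝ (Fin d)) 1),
      (U : EuclideanSpace ℝ (Fin d)) ≠ 0 := by
    intro U
    have := U.2
    rw [mem_sphere_zero_iff_norm] at this
    intro h0
    rw [h0] at this
    simp at this
  apply continuous_pi
  intro n
  unfold G0
  by_cases hn : n ∈ V
  · simp only [dif_pos hn]
    apply Continuous.add continuous_const
    apply Continuous.div
    · exact (cont_yv _).comp continuous_subtype_val
    · exact Continuous.mul continuous_const (cont_mx.comp continuous_subtype_val)
    · intro U
      have : 0 < mx (U : EuclideanSpace ℝ (Fin d)) := mx_pos (hne U)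
      positivity
  · simp only [dif_neg hn]
    exact continuous_const

/-- the equivalence between the sphere and the boundary of the simplex -/
noncomputable def sphereEquivBd : ↥(Metric.sphere (0 : EuclideanSpace ℝ (Fin d)) 1) ≃
    ↥(geomReal (bdK V)) := by
  apply Equiv.ofBijective (f := fun U => ⟨G0 V h (U : EuclideanSpace ℝ (Fin d)), by
    apply G0_mem
    have := U.2
    rw [mem_sphere_zero_iff_norm] at this
    intro h0
    rw [h0] at this
    simp at this⟩)
  constructor
  · intro U U' hUU
    have h1 := U.2
    have h2 := U'.2
    rw [mem_sphere_zero_iff_norm] at h1 h2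
    apply Subtype.ext
    apply G0_inj V h h1 h2
    exact congrArg Subtype.val hUU
  · intro x
    obtain ⟨u, hu1, hu2⟩ := G0_surj V h x.2
    refine ⟨⟨u, by rwa [mem_sphere_zero_iff_norm]⟩, ?_⟩
    exact Subtype.ext hu2

/-- the boundary of a simplex with `d+1` vertices is homeomorphic to `S^{d-1}` -/
noncomputable def bdHomeo : ↥(geomReal (bdK V)) ≃ₜ
    ↥(Metric.sphere (0 : EuclideanSpace ℝ (Fin d)) 1) :=
  (Continuous.homeoOfEquivCompactToT2 (f := sphereEquivBd V h)
    (Continuous.subtype_mk (cont_G0 V h) _)).symm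

end Sphere


/-- full simplex on a vertex set -/
def fullK (V : Finset ℕ) : Set (Finset ℕ) := {σ | σ ⊆ V}

lemma mem_geomReal_fullK {V : Finset ℕ} {x : ℕ → ℝ} :
    x ∈ geomReal (fullK V) ↔
      (∀ i, 0 ≤ x i) ∧ (∀ i, i ∉ V → x i = 0) ∧ ∑ i ∈ V, x i = 1 := by
  constructor
  · rintro ⟨hpos, σ, hσV, hsupp, hsum⟩
    have hzero : ∀ i, i ∉ V → x i = 0 := by
      intro i hi; by_contra h; exact hi (hσV (hsupp i h))
    refine ⟨hpos, hzero, ?_⟩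
    rw [← Finset.sum_subset hσV (fun i _ hiσ => by
      by_contra h; exact hiσ (hsupp i h))]
    exact hsum
  · rintro ⟨hpos, hz, hsum⟩
    exact ⟨hpos, V, le_refl V, fun i hi => by by_contra h; exact hi (hz i h), hsum⟩

lemma contractible_fullK (V : Finset ℕ) (hV : V.Nonempty) :
    ContractibleSpace ↥(geomReal (fullK V)) := by
  obtain ⟨v0, hv0⟩ := hV
  set p : ℕ → ℝ := fun i => if i = v0 then 1 else 0 with hp
  have hpmem : p ∈ geomReal (fullK V) := by
    rw [mem_geomReal_fullK]
    refine ⟨fun i => by rw [hp]; dsimp only; split <;> norm_num,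
      fun i hi => by rw [hp]; dsimp only; rw [if_neg (by rintro rfl; exact hi hv0)], ?_⟩
    rw [hp]
    rw [Finset.sum_ite_eq' V v0 (fun _ => (1:ℝ)), if_pos hv0]
  rw [contractible_iff_id_nullhomotopic]
  refine ⟨⟨p, hpmem⟩, ?_⟩
  have hmem : ∀ (t : ℝ), 0 ≤ t → t ≤ 1 → ∀ x ∈ geomReal (fullK V),
      (fun i => (1 - t) * x i + t * p i) ∈ geomReal (fullK V) := by
    intro t ht0 ht1 x hx
    rw [mem_geomReal_fullK] at *
    obtain ⟨hpos, hz, hsum⟩ := hx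
    obtain ⟨hpos', hz', hsum'⟩ := hpmem
    refine ⟨fun i => by have := hpos i; have := hpos' i; nlinarith, fun i hi => by
      rw [hz i hi, hz' i hi]; ring, ?_⟩
    rw [Finset.sum_add_distrib, ← Finset.mul_sum, ← Finset.mul_sum, hsum, hsum']
    ring
  refine ⟨⟨⟨fun q => ⟨fun i => (1 - (q.1 : ℝ)) * (q.2 : ℕ → ℝ) i + (q.1 : ℝ) * p i,
    hmem q.1 q.1.2.1 q.1.2.2 _ q.2.2⟩, ?_⟩, ?_, ?_⟩⟩
  · apply Continuous.subtype_mk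
    apply continuous_pi
    intro i
    have h1 : Continuous fun q : ↥unitInterval × ↥(geomReal (fullK V)) => (q.1 : ℝ) := by
      exact continuous_subtype_val.comp continuous_fst
    have h2 : Continuous fun q : ↥unitInterval × ↥(geomReal (fullK V)) => (q.2 : ℕ → ℝ) i :=
      (continuous_apply i).comp (continuous_subtype_val.comp continuous_snd)
    fun_prop
  · intro x
    ext i
    simp
  · intro x
    ext i
    simp

/-- the family of complexes arising from `K_t` by deleting the vertices in `S` -/
def Kc (M : ℕ) (S : Finset ℕ) : Set (Finset ℕ) :=
  {σ | σ ⊆ Finset.Icc 1 M ∧ (∀ u ∈ S, u ∉ σ) ∧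
    ∃ i ∈ Finset.Icc 1 (M - 1), i ∉ σ ∧ i + 1 ∉ σ}

lemma down_Kc (M : ℕ) (S : Finset ℕ) : ∀ σ ∈ Kc M S, ∀ τ, τ ⊆ σ → τ ∈ Kc M S := by
  rintro σ ⟨hsub, hS, i, hi, h1, h2⟩ τ hτ
  exact ⟨hτ.trans hsub, fun u hu h => hS u hu (hτ h), i, hi,
    fun h => h1 (hτ h), fun h => h2 (hτ h)⟩

lemma del_Kc (M : ℕ) (S : Finset ℕ) (v : ℕ) : Del (Kc M S) v = Kc M (insert v S) := by
  ext σ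
  constructor
  · rintro ⟨⟨hsub, hS, hp⟩, hv⟩
    refine ⟨hsub, fun u hu => ?_, hp⟩
    rcases Finset.mem_insert.mp hu with rfl | hu
    · exact hv
    · exact hS u hu
  · rintro ⟨hsub, hS, hp⟩
    exact ⟨⟨hsub, fun u hu => hS u (Finset.mem_insert_of_mem hu), hp⟩,
      hS v (Finset.mem_insert_self v S)⟩

def S1 (k : ℕ) : Finset ℕ := (Finset.range k).image (fun j => 3 * j + 2)

lemma mem_S1 {k u : ℕ} : u ∈ S1 k ↔ ∃ j < k, u = 3 * j + 2 := by
  unfold S1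
  simp only [Finset.mem_image, Finset.mem_range]
  constructor
  · rintro ⟨j, hj, rfl⟩; exact ⟨j, hj, rfl⟩
  · rintro ⟨j, hj, rfl⟩; exact ⟨j, hj, rfl⟩

lemma S1_zero : S1 0 = ∅ := by simp [S1]

lemma S1_succ (k : ℕ) : S1 (k + 1) = insert (3 * k + 2) (S1 k) := by
  unfold S1
  rw [Finset.range_add_one, Finset.image_insert]

lemma card_S1 (k : ℕ) : (S1 k).card = k := by
  unfold S1
  rw [Finset.card_image_of_injective _ (fun a b hab => by omega), Finset.card_range]

/-- domination for the phase-1 folds -/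
lemma dom1 (M k : ℕ) : ∀ σ ∈ Kc M (S1 k), (3 * k + 2) ∈ σ →
    insert (3 * k + 1) σ ∈ Kc M (S1 k) := by
  rintro σ ⟨hsub, hS, i, hi, h1, h2⟩ hv
  have hvM : 3 * k + 2 ≤ M := (Finset.mem_Icc.mp (hsub hv)).2
  have hiM : 1 ≤ i ∧ i ≤ M - 1 := Finset.mem_Icc.mp hi
  refine ⟨Finset.insert_subset (Finset.mem_Icc.mpr (by omega)) hsub, ?_, ?_⟩
  · intro u hu
    obtain ⟨j, hj, rfl⟩ := mem_S1.mp hu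
    rw [Finset.mem_insert]
    push_neg
    exact ⟨by omega, hS _ hu⟩
  · by_cases hiw : i ≠ 3 * k + 1 ∧ i + 1 ≠ 3 * k + 1
    · refine ⟨i, hi, ?_, ?_⟩
      · rw [Finset.mem_insert]; push_neg; exact ⟨hiw.1, h1⟩
      · rw [Finset.mem_insert]; push_neg; exact ⟨hiw.2, h2⟩
    · push_neg at hiw
      by_cases hcase : i = 3 * k + 1
      · exfalso; apply h2; rw [hcase]; convert hv using 1
      · have hi1 : i + 1 = 3 * k + 1 := hiw hcase
        have hik : i = 3 * k := by omega
        have hk1 : 1 ≤ k := by omega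
        have hmem : 3 * (k - 1) + 2 ∈ S1 k := mem_S1.mpr ⟨k - 1, by omega, rfl⟩
        refine ⟨3 * (k - 1) + 2, Finset.mem_Icc.mpr (by omega), ?_, ?_⟩
        · rw [Finset.mem_insert]; push_neg
          exact ⟨by omega, hS _ hmem⟩
        · rw [Finset.mem_insert]; push_neg
          constructor
          · omega
          · have : 3 * (k - 1) + 2 + 1 = i := by omega
            rw [this]; exact h1

/-- domination for the last fold in the case `t = 3m` -/
lemma dom2 (m : ℕ) : ∀ σ ∈ Kc (3 * m + 2) (S1 m), (3 * m + 1) ∈ σ →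
    insert (3 * m + 2) σ ∈ Kc (3 * m + 2) (S1 m) := by
  rintro σ ⟨hsub, hS, i, hi, h1, h2⟩ hv
  have hiM : 1 ≤ i ∧ i ≤ 3 * m + 2 - 1 := Finset.mem_Icc.mp hi
  refine ⟨Finset.insert_subset (Finset.mem_Icc.mpr (by omega)) hsub, ?_, ?_⟩
  · intro u hu
    obtain ⟨j, hj, rfl⟩ := mem_S1.mp hu
    rw [Finset.mem_insert]; push_neg
    exact ⟨by omega, hS _ hu⟩
  · refine ⟨i, hi, ?_, ?_⟩
    · rw [Finset.mem_insert]; push_neg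
      refine ⟨by omega, h1⟩
    · rw [Finset.mem_insert]; push_neg
      refine ⟨?_, h2⟩
      intro hcon
      apply h1
      have : i = 3 * m + 1 := by omega
      rw [this]; exact hv

/-- domination for the last fold in the case `t = 3m+2` -/
lemma dom3 (m : ℕ) : ∀ σ ∈ Kc (3 * m + 4) (S1 (m + 1)), 1 ∈ σ →
    insert (3 * m + 4) σ ∈ Kc (3 * m + 4) (S1 (m + 1)) := by
  rintro σ ⟨hsub, hS, i, hi, h1, h2⟩ hv
  have hiM : 1 ≤ i ∧ i ≤ 3 * m + 4 - 1 := Finset.mem_Icc.mp hi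
  have hine1 : i ≠ 1 := fun hcon => h1 (hcon ▸ hv)
  refine ⟨Finset.insert_subset (Finset.mem_Icc.mpr (by omega)) hsub, ?_, ?_⟩
  · intro u hu
    obtain ⟨j, hj, rfl⟩ := mem_S1.mp hu
    rw [Finset.mem_insert]; push_neg
    exact ⟨by omega, hS _ hu⟩
  · by_cases hiw : i + 1 = 3 * m + 4
    · have hmem : 3 * m + 2 ∈ S1 (m + 1) := mem_S1.mpr ⟨m, by omega, rfl⟩
      refine ⟨3 * m + 2, Finset.mem_Icc.mpr (by omega), ?_, ?_⟩
      · rw [Finset.mem_insert]; push_neg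
        exact ⟨by omega, hS _ hmem⟩
      · rw [Finset.mem_insert]; push_neg
        refine ⟨by omega, ?_⟩
        have : 3 * m + 2 + 1 = i := by omega
        rw [this]; exact h1
    · refine ⟨i, hi, ?_, ?_⟩
      · rw [Finset.mem_insert]; push_neg
        exact ⟨by omega, h1⟩
      · rw [Finset.mem_insert]; push_neg
        exact ⟨hiw, h2⟩


lemma KFace_eq {t : ℕ} : {σ : Finset ℕ | KFace t σ} = Kc (t + 2) ∅ := by
  ext σ
  simp only [Set.mem_setOf_eq, KFace, Kc, Finset.notMem_empty, false_implies, implies_true,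
    true_and]
  have : t + 2 - 1 = t + 1 := by omega
  rw [this]

lemma Kc_eq_bdK (M : ℕ) (S : Finset ℕ)
    (hS : S ⊆ Finset.Icc 1 M)
    (hnc : ∀ i, ¬(i ∈ S ∧ i + 1 ∈ S))
    (hnb : ∀ x, x ∈ Finset.Icc 1 M → x ∉ S → (x + 1 ∈ S ∨ ∃ s ∈ S, s + 1 = x)) :
    Kc M S = bdK (Finset.Icc 1 M \ S) := by
  ext σ
  constructor
  · rintro ⟨hsub, hS', i, hi, h1, h2⟩
    have hiM := Finset.mem_Icc.mp hi
    constructor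
    · intro a ha
      rw [Finset.mem_sdiff]
      refine ⟨hsub ha, fun haS => hS' a haS ha⟩
    · intro heq
      apply hnc i
      constructor
      · by_contra hiS
        apply h1
        rw [heq, Finset.mem_sdiff]
        exact ⟨Finset.mem_Icc.mpr (by omega), hiS⟩
      · by_contra hiS
        apply h2
        rw [heq, Finset.mem_sdiff]
        exact ⟨Finset.mem_Icc.mpr (by omega), hiS⟩
  · rintro ⟨hsubV, hneV⟩
    have havoid : ∀ u ∈ S, u ∉ σ := by
      intro u hu hc
      have := hsubV hc
      rw [Finset.mem_sdiff] at this
      exact this.2 hu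
    have hsub : σ ⊆ Finset.Icc 1 M := fun a ha => (Finset.mem_sdiff.mp (hsubV ha)).1
    refine ⟨hsub, havoid, ?_⟩
    have hss : σ ⊂ Finset.Icc 1 M \ S := Finset.ssubset_iff_subset_ne.mpr ⟨hsubV, hneV⟩
    obtain ⟨x, hxV, hxσ⟩ := Finset.exists_of_ssubset hss
    rw [Finset.mem_sdiff] at hxV
    obtain ⟨hxIcc, hxS⟩ := hxV
    have hxM := Finset.mem_Icc.mp hxIcc
    rcases hnb x hxIcc hxS with hleft | ⟨s, hsS, hs1⟩
    · have hx1M := Finset.mem_Icc.mp (hS hleft)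
      exact ⟨x, Finset.mem_Icc.mpr (by omega), hxσ, havoid _ hleft⟩
    · have hsM := Finset.mem_Icc.mp (hS hsS)
      refine ⟨s, Finset.mem_Icc.mpr (by omega), havoid _ hsS, ?_⟩
      rw [hs1]
      exact hxσ

lemma Kc_eq_fullK (M : ℕ) (S : Finset ℕ) (h1S : 1 ∈ S) (h2S : 2 ∈ S) (hM : 2 ≤ M) :
    Kc M S = fullK (Finset.Icc 1 M \ S) := by
  ext σ
  constructor
  · rintro ⟨hsub, hS', _⟩
    intro a ha
    rw [Finset.mem_sdiff]
    exact ⟨hsub ha, fun haS => hS' a haS ha⟩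
  · intro hsubV
    have havoid : ∀ u ∈ S, u ∉ σ := by
      intro u hu hc
      have := hsubV hc
      rw [Finset.mem_sdiff] at this
      exact this.2 hu
    refine ⟨fun a ha => (Finset.mem_sdiff.mp (hsubV ha)).1, havoid, 1,
      Finset.mem_Icc.mpr (by omega), havoid _ h1S, havoid _ h2S⟩

/-- terminal identification, case `t = 3m` -/
lemma termA (m : ℕ) :
    Kc (3 * m + 2) (insert (3 * m + 1) (S1 m)) =
      bdK (Finset.Icc 1 (3 * m + 2) \ insert (3 * m + 1) (S1 m)) := by
  apply Kc_eq_bdK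
  · intro u hu
    rcases Finset.mem_insert.mp hu with rfl | hu
    · exact Finset.mem_Icc.mpr (by omega)
    · obtain ⟨j, hj, rfl⟩ := mem_S1.mp hu
      exact Finset.mem_Icc.mpr (by omega)
  · rintro i ⟨hi, hi1⟩
    rcases Finset.mem_insert.mp hi with rfl | hi <;>
      rcases Finset.mem_insert.mp hi1 with h | h <;>
      [skip; skip; skip; skip] <;>
      first
        | omega
        | (obtain ⟨j, hj, hj2⟩ := mem_S1.mp h; omega)
        | (obtain ⟨j, hj, rfl⟩ := mem_S1.mp hi;
           first
             | omega
             | (obtain ⟨j', hj', hj2⟩ := mem_S1.mp h; omega))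
  · intro x hxIcc hxS
    have hxM := Finset.mem_Icc.mp hxIcc
    rw [Finset.mem_insert] at hxS
    push_neg at hxS
    obtain ⟨hx1, hx2⟩ := hxS
    rw [mem_S1] at hx2
    push_neg at hx2
    have h3 : x % 3 = 0 ∨ x % 3 = 1 ∨ x % 3 = 2 := by omega
    rcases h3 with h3 | h3 | h3
    · -- x = 3j, j ≥ 1 : predecessor 3(j-1)+2 ∈ S1 m
      obtain ⟨j, hj⟩ : ∃ j, x = 3 * j := ⟨x / 3, by omega⟩
      refine Or.inr ⟨3 * (j - 1) + 2, Finset.mem_insert_of_mem (mem_S1.mpr ⟨j - 1, by omega, rfl⟩),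
        by omega⟩
    · -- x = 3j+1 with j < m : successor 3j+2 ∈ S1 m
      obtain ⟨j, hj⟩ : ∃ j, x = 3 * j + 1 := ⟨x / 3, by omega⟩
      have hjm : j < m := by omega
      exact Or.inl (Finset.mem_insert_of_mem (mem_S1.mpr ⟨j, hjm, by omega⟩))
    · -- x = 3j+2 : must be x = 3m+2, predecessor 3m+1
      have hx3m2 : x = 3 * m + 2 := by
        obtain ⟨j, hj⟩ : ∃ j, x = 3 * j + 2 := ⟨x / 3, by omega⟩
        have := hx2 j
        omega
      exact Or.inr ⟨3 * m + 1, Finset.mem_insert_self _ _, by omega⟩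

/-- terminal identification, case `t = 3m+1` -/
lemma termB (m : ℕ) :
    Kc (3 * m + 3) (S1 (m + 1)) = bdK (Finset.Icc 1 (3 * m + 3) \ S1 (m + 1)) := by
  apply Kc_eq_bdK
  · intro u hu
    obtain ⟨j, hj, rfl⟩ := mem_S1.mp hu
    exact Finset.mem_Icc.mpr (by omega)
  · rintro i ⟨hi, hi1⟩
    obtain ⟨j, hj, hj2⟩ := mem_S1.mp hi
    obtain ⟨j', hj', hj2'⟩ := mem_S1.mp hi1
    omega
  · intro x hxIcc hxS
    have hxM := Finset.mem_Icc.mp hxIcc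
    rw [mem_S1] at hxS
    push_neg at hxS
    have h3 : x % 3 = 0 ∨ x % 3 = 1 ∨ x % 3 = 2 := by omega
    rcases h3 with h3 | h3 | h3
    · obtain ⟨j, hj⟩ : ∃ j, x = 3 * j := ⟨x / 3, by omega⟩
      exact Or.inr ⟨3 * (j - 1) + 2, mem_S1.mpr ⟨j - 1, by omega, rfl⟩, by omega⟩
    · obtain ⟨j, hj⟩ : ∃ j, x = 3 * j + 1 := ⟨x / 3, by omega⟩
      exact Or.inl (mem_S1.mpr ⟨j, by omega, by omega⟩)
    · exfalso
      obtain ⟨j, hj⟩ : ∃ j, x = 3 * j + 2 := ⟨x / 3, by omega⟩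
      have := hxS j
      omega

/-- terminal identification, case `t = 3m+2` -/
lemma termC (m : ℕ) :
    Kc (3 * m + 4) (insert 1 (S1 (m + 1))) =
      fullK (Finset.Icc 1 (3 * m + 4) \ insert 1 (S1 (m + 1))) := by
  apply Kc_eq_fullK
  · exact Finset.mem_insert_self _ _
  · exact Finset.mem_insert_of_mem (mem_S1.mpr ⟨0, by omega, by omega⟩)
  · omega

lemma cardA (m : ℕ) : (Finset.Icc 1 (3 * m + 2) \ insert (3 * m + 1) (S1 m)).card = 2 * m + 1 := by
  have hsub : insert (3 * m + 1) (S1 m) ⊆ Finset.Icc 1 (3 * m + 2) := by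
    intro u hu
    rcases Finset.mem_insert.mp hu with rfl | hu
    · exact Finset.mem_Icc.mpr (by omega)
    · obtain ⟨j, hj, rfl⟩ := mem_S1.mp hu
      exact Finset.mem_Icc.mpr (by omega)
  rw [Finset.card_sdiff_of_subset hsub, Finset.card_insert_of_notMem (by
    rw [mem_S1]; push_neg; intro j hj; omega), card_S1, Nat.card_Icc]
  omega

lemma cardB (m : ℕ) : (Finset.Icc 1 (3 * m + 3) \ S1 (m + 1)).card = 2 * m + 2 := by
  have hsub : S1 (m + 1) ⊆ Finset.Icc 1 (3 * m + 3) := by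
    intro u hu
    obtain ⟨j, hj, rfl⟩ := mem_S1.mp hu
    exact Finset.mem_Icc.mpr (by omega)
  rw [Finset.card_sdiff_of_subset hsub, card_S1, Nat.card_Icc]
  omega

lemma nonemptyC (m : ℕ) : (Finset.Icc 1 (3 * m + 4) \ insert 1 (S1 (m + 1))).Nonempty := by
  refine ⟨3, ?_⟩
  rw [Finset.mem_sdiff, Finset.mem_insert]
  push_neg
  refine ⟨Finset.mem_Icc.mpr (by omega), by omega, ?_⟩
  rw [mem_S1]
  push_neg
  intro j hj
  omega

/-- the phase-1 chain of folds -/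
lemma chainEquiv (M k : ℕ) : Nonempty (ContinuousMap.HomotopyEquiv
    ↥(geomReal (Kc M ∅)) ↥(geomReal (Kc M (S1 k)))) := by
  induction k with
  | zero =>
      rw [S1_zero]
      exact ⟨ContinuousMap.HomotopyEquiv.refl _⟩
  | succ k ih =>
      obtain ⟨e⟩ := ih
      have e2 := foldEquiv (Kc M (S1 k)) (3 * k + 2) (3 * k + 1) (by omega)
        (down_Kc M (S1 k)) (dom1 M k)
      have hset : geomReal (Del (Kc M (S1 k)) (3 * k + 2)) = geomReal (Kc M (S1 (k + 1))) := by
        rw [del_Kc, S1_succ]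
      have e3 := (Homeomorph.setCongr hset).toHomotopyEquiv
      exact ⟨(e.trans e2).trans e3⟩

end Stmt9

open Stmt9 in
/-- `|K_t|` is homotopy equivalent to `S^{2m-1}` if `t = 3m`, to `S^{2m}` if `t = 3m+1`,
and is contractible if `t = 3m+2`. -/
theorem stmt9 (t m : ℕ) :
    (t = 3 * m → Nonempty (ContinuousMap.HomotopyEquiv
      ↥(geomReal {σ | KFace t σ})
      ↥(Metric.sphere (0 : EuclideanSpace ℝ (Fin (2 * m))) 1))) ∧
    (t = 3 * m + 1 → Nonempty (ContinuousMap.HomotopyEquiv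
      ↥(geomReal {σ | KFace t σ})
      ↥(Metric.sphere (0 : EuclideanSpace ℝ (Fin (2 * m + 1))) 1))) ∧
    (t = 3 * m + 2 → ContractibleSpace ↥(geomReal {σ | KFace t σ})) := by
  refine ⟨?_, ?_, ?_⟩
  · rintro rfl
    obtain ⟨e1⟩ := chainEquiv (3 * m + 2) m
    have e0 := (Homeomorph.setCongr (show geomReal {σ : Finset ℕ | KFace (3 * m) σ}
      = geomReal (Kc (3 * m + 2) ∅) by rw [KFace_eq])).toHomotopyEquiv
    have e2 := foldEquiv (Kc (3 * m + 2) (S1 m)) (3 * m + 1) (3 * m + 2) (by omega)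
      (down_Kc _ _) (dom2 m)
    have e3 := (Homeomorph.setCongr (show geomReal (Del (Kc (3 * m + 2) (S1 m)) (3 * m + 1))
      = geomReal (bdK (Finset.Icc 1 (3 * m + 2) \ insert (3 * m + 1) (S1 m))) by
        rw [del_Kc, termA])).toHomotopyEquiv
    have e4 := (bdHomeo (Finset.Icc 1 (3 * m + 2) \ insert (3 * m + 1) (S1 m))
      (cardA m)).toHomotopyEquiv
    exact ⟨(((e0.trans e1).trans e2).trans e3).trans e4⟩
  · rintro rfl
    obtain ⟨e1⟩ := chainEquiv (3 * m + 3) (m + 1)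
    have e0 := (Homeomorph.setCongr (show geomReal {σ : Finset ℕ | KFace (3 * m + 1) σ}
      = geomReal (Kc (3 * m + 3) ∅) by
        have : 3 * m + 1 + 2 = 3 * m + 3 := by omega
        rw [KFace_eq, this])).toHomotopyEquiv
    have e3 := (Homeomorph.setCongr (show geomReal (Kc (3 * m + 3) (S1 (m + 1)))
      = geomReal (bdK (Finset.Icc 1 (3 * m + 3) \ S1 (m + 1))) by rw [termB])).toHomotopyEquiv
    have e4 := (bdHomeo (Finset.Icc 1 (3 * m + 3) \ S1 (m + 1)) (cardB m)).toHomotopyEquiv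
    exact ⟨((e0.trans e1).trans e3).trans e4⟩
  · rintro rfl
    obtain ⟨e1⟩ := chainEquiv (3 * m + 4) (m + 1)
    have e0 := (Homeomorph.setCongr (show geomReal {σ : Finset ℕ | KFace (3 * m + 2) σ}
      = geomReal (Kc (3 * m + 4) ∅) by
        have : 3 * m + 2 + 2 = 3 * m + 4 := by omega
        rw [KFace_eq, this])).toHomotopyEquiv
    have e2 := foldEquiv (Kc (3 * m + 4) (S1 (m + 1))) 1 (3 * m + 4) (by omega)
      (down_Kc _ _) (dom3 m)
    have e3 := (Homeomorph.setCongr (show geomReal (Del (Kc (3 * m + 4) (S1 (m + 1))) 1)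
      = geomReal (fullK (Finset.Icc 1 (3 * m + 4) \ insert 1 (S1 (m + 1)))) by
        rw [del_Kc, termC])).toHomotopyEquiv
    haveI := contractible_fullK _ (nonemptyC m)
    exact (((e0.trans e1).trans e2).trans e3).contractibleSpace
end

section
/- The reduced Euler characteristic of the complex K_t on {1,...,t+2} (faces are subsets avoiding some pair {i,i+1} entirely) equals −1 if t ≡ 0 (mod 3), +1 if t ≡ 1 (mod 3), and 0 if t ≡ 2 (mod 3). -/
def ff (n : ℕ) : ℤ :=
  ∑ σ ∈ (Finset.Icc 1 n).powerset.filter (fun σ => ∀ i ∈ σ, i + 1 ∉ σ), (-1 : ℤ) ^ σ.card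

lemma ff0 : ff 0 = 1 := by decide
lemma ff1 : ff 1 = 0 := by decide

lemma ffrec (n : ℕ) : ff (n + 2) = ff (n + 1) - ff n := by
  have hI : Finset.Icc 1 (n + 2) = insert (n + 2) (Finset.Icc 1 (n + 1)) :=
    (Finset.insert_Icc_right_eq_Icc_add_one (by omega)).symm
  have hI' : Finset.Icc 1 (n + 1) = insert (n + 1) (Finset.Icc 1 n) :=
    (Finset.insert_Icc_right_eq_Icc_add_one (by omega)).symm
  have hnot : (n + 2) ∉ Finset.Icc 1 (n + 1) := by simp
  have hnot' : (n + 1) ∉ Finset.Icc 1 n := by simp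
  unfold ff
  rw [Finset.sum_filter, Finset.sum_filter, Finset.sum_filter, hI,
    Finset.sum_powerset_insert hnot]
  have key : ∑ σ ∈ (Finset.Icc 1 (n + 1)).powerset,
      (if ∀ i ∈ insert (n + 2) σ, i + 1 ∉ insert (n + 2) σ
        then (-1 : ℤ) ^ (insert (n + 2) σ).card else 0) =
      -∑ σ ∈ (Finset.Icc 1 n).powerset,
        (if ∀ i ∈ σ, i + 1 ∉ σ then (-1 : ℤ) ^ σ.card else 0) := by
    rw [← Finset.sum_neg_distrib]
    rw [hI', Finset.sum_powerset_insert hnot']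
    have h2 : ∑ σ ∈ (Finset.Icc 1 n).powerset,
        (if ∀ i ∈ insert (n + 2) (insert (n + 1) σ), i + 1 ∉ insert (n + 2) (insert (n + 1) σ)
          then (-1 : ℤ) ^ (insert (n + 2) (insert (n + 1) σ)).card else 0) = 0 := by
      apply Finset.sum_eq_zero
      intro σ _
      rw [if_neg]
      intro h
      exact h (n + 1) (by simp) (by simp)
    rw [h2, add_zero]
    apply Finset.sum_congr rfl
    intro σ hσ
    rw [Finset.mem_powerset] at hσ
    have hmem : ∀ j ∈ σ, j ≤ n := fun j hj => (Finset.mem_Icc.mp (hσ hj)).2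
    have hn2 : (n + 2) ∉ σ := fun h => by have := hmem _ h; omega
    have hiff : (∀ i ∈ insert (n + 2) σ, i + 1 ∉ insert (n + 2) σ) ↔ (∀ i ∈ σ, i + 1 ∉ σ) := by
      constructor
      · intro h i hi hi1
        exact h i (Finset.mem_insert_of_mem hi) (Finset.mem_insert_of_mem hi1)
      · intro h i hi
        rcases Finset.mem_insert.mp hi with rfl | hi
        · intro hc
          rcases Finset.mem_insert.mp hc with hc | hc
          · omega
          · have := hmem _ hc; omega
        · intro hc
          rcases Finset.mem_insert.mp hc with hc | hc
          · have := hmem _ hi; omega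
          · exact h i hi hc
    rw [Finset.card_insert_of_notMem hn2]
    by_cases hind : ∀ i ∈ σ, i + 1 ∉ σ
    · rw [if_pos (hiff.mpr hind), if_pos hind, pow_succ]; ring
    · rw [if_neg (fun h => hind (hiff.mp h)), if_neg hind, neg_zero]
  rw [key]; ring

lemma ffval : ∀ n, ff n = if n % 6 = 0 then 1 else if n % 6 = 1 then 0 else
    if n % 6 = 2 then -1 else if n % 6 = 3 then -1 else if n % 6 = 4 then 0 else 1 := by
  intro n
  induction n using Nat.strong_induction_on with
  | _ n ih =>
    match n with
    | 0 => simpa using ff0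
    | 1 => simpa using ff1
    | (m + 2) =>
      rw [ffrec, ih (m + 1) (by omega), ih m (by omega)]
      have h : m % 6 = 0 ∨ m % 6 = 1 ∨ m % 6 = 2 ∨ m % 6 = 3 ∨ m % 6 = 4 ∨ m % 6 = 5 := by
        omega
      rcases h with h | h | h | h | h | h <;>
        rw [show (m + 1) % 6 = (m % 6 + 1) % 6 by omega,
          show (m + 2) % 6 = (m % 6 + 2) % 6 by omega, h] <;> norm_num

open Classical in
/-- The reduced Euler characteristic `χ̃ = ∑_{faces σ, incl. ∅} (-1)^{|σ|-1}` of `K_t`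
equals `-1, +1, 0` according to `t ≡ 0, 1, 2 (mod 3)`. -/
theorem stmt10 (t : ℕ) :
    -(∑ σ ∈ (Finset.Icc 1 (t + 2)).powerset.filter (fun σ => KFace t σ),
        (-1 : ℤ) ^ σ.card) =
      if t % 3 = 0 then -1 else if t % 3 = 1 then 1 else 0 := by
  classical
  set T := Finset.Icc 1 (t + 2) with hTdef
  have hTcard : T.card = t + 2 := by simp [hTdef]
  have htotal : ∑ σ ∈ T.powerset, (-1 : ℤ) ^ σ.card = 0 := by
    rw [Finset.sum_powerset_neg_one_pow_card, if_neg]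
    have : (1 : ℕ) ∈ T := by simp [hTdef]
    intro h; rw [h] at this; simp at this
  have hsplit := Finset.sum_filter_add_sum_filter_not T.powerset
    (fun σ => KFace t σ) (fun σ => (-1 : ℤ) ^ σ.card)
  have hnon : ∑ σ ∈ T.powerset.filter (fun σ => ¬ KFace t σ), (-1 : ℤ) ^ σ.card
      = (-1) ^ t * ff (t + 2) := by
    unfold ff
    rw [Finset.mul_sum]
    apply Finset.sum_nbij' (i := fun σ => T \ σ) (j := fun τ => T \ τ)
    · intro σ hσ
      simp only [Finset.mem_filter, Finset.mem_powerset] at hσ ⊢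
      obtain ⟨hsub, hnk⟩ := hσ
      refine ⟨Finset.sdiff_subset, ?_⟩
      intro i hi hi1
      rw [Finset.mem_sdiff, hTdef, Finset.mem_Icc] at hi hi1
      exact hnk ⟨hsub, i, Finset.mem_Icc.mpr ⟨hi.1.1, by omega⟩, hi.2, hi1.2⟩
    · intro τ hτ
      simp only [Finset.mem_filter, Finset.mem_powerset] at hτ ⊢
      obtain ⟨hsub, hind⟩ := hτ
      refine ⟨Finset.sdiff_subset, ?_⟩
      rintro ⟨-, i, hi, hiσ, hi1σ⟩
      rw [Finset.mem_Icc] at hi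
      have hiT : i ∈ T := by rw [hTdef, Finset.mem_Icc]; omega
      have hi1T : i + 1 ∈ T := by rw [hTdef, Finset.mem_Icc]; omega
      have h1 : i ∈ τ := by
        by_contra h; exact hiσ (Finset.mem_sdiff.mpr ⟨hiT, h⟩)
      have h2 : i + 1 ∈ τ := by
        by_contra h; exact hi1σ (Finset.mem_sdiff.mpr ⟨hi1T, h⟩)
      exact hind i h1 h2
    · intro σ hσ
      simp only [Finset.mem_filter, Finset.mem_powerset] at hσ
      exact Finset.sdiff_sdiff_eq_self hσ.1
    · intro τ hτ
      simp only [Finset.mem_filter, Finset.mem_powerset] at hτ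
      exact Finset.sdiff_sdiff_eq_self hτ.1
    · intro σ hσ
      simp only [Finset.mem_filter, Finset.mem_powerset] at hσ
      have hc : (T \ σ).card + σ.card = t + 2 := by
        rw [Finset.card_sdiff_add_card_eq_card hσ.1, hTcard]
      set a := σ.card
      set b := (T \ σ).card
      have h1 : (-1 : ℤ) ^ b * (-1) ^ a = (-1) ^ (t + 2) := by rw [← pow_add, hc]
      have hb2 : (-1 : ℤ) ^ b * (-1) ^ b = 1 := by
        rw [← pow_add]; exact Even.neg_one_pow ⟨b, rfl⟩
      calc (-1 : ℤ) ^ a = ((-1) ^ b * (-1) ^ b) * (-1) ^ a := by rw [hb2, one_mul]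
        _ = (-1) ^ b * ((-1) ^ b * (-1) ^ a) := by ring
        _ = (-1) ^ b * (-1) ^ (t + 2) := by rw [h1]
        _ = (-1) ^ t * (-1) ^ b := by rw [pow_add]; ring
  have hfaces : ∑ σ ∈ T.powerset.filter (fun σ => KFace t σ), (-1 : ℤ) ^ σ.card
      = -((-1) ^ t * ff (t + 2)) := by linarith
  rw [hfaces, neg_neg, ffval]
  have h : t % 6 = 0 ∨ t % 6 = 1 ∨ t % 6 = 2 ∨ t % 6 = 3 ∨ t % 6 = 4 ∨ t % 6 = 5 := by omega
  rcases h with h | h | h | h | h | h <;>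
    [ (have hp : Even t := Nat.even_iff.mpr (by omega));
      (have hp : Odd t := Nat.odd_iff.mpr (by omega));
      (have hp : Even t := Nat.even_iff.mpr (by omega));
      (have hp : Odd t := Nat.odd_iff.mpr (by omega));
      (have hp : Even t := Nat.even_iff.mpr (by omega));
      (have hp : Odd t := Nat.odd_iff.mpr (by omega))] <;>
    rw [show (t + 2) % 6 = (t % 6 + 2) % 6 by omega, h,
      show t % 3 = t % 6 % 3 by omega, h] <;>
    first
      | (rw [Even.neg_one_pow hp]; norm_num)
      | (rw [Odd.neg_one_pow hp]; norm_num)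
end

section
/- If T is a string (path) with t vertices and t ≥ k−1, then the k-fold disconnecting complex D_k(T) is isomorphic to the complex δ_{(k+1, 1^{t+2−k})}; concretely, D_k(T) is the complex on the t+2 vertices of T̂ whose faces are the subsets σ such that some k consecutive vertices of the path T̂ all avoid σ. -/
/-- A leaf of a graph: a vertex with exactly one neighbour. -/
def IsLeaf {α : Type*} (G : SimpleGraph α) (v : α) : Prop := ∃! w, G.Adj v w

/-- The path graph `T̂` on the vertices `{1,...,m}` (as a subgraph of ℕ). -/
def pathGraph (m : ℕ) : SimpleGraph ℕ :=
  SimpleGraph.fromRel fun a b => b = a + 1 ∧ 1 ≤ a ∧ b ≤ m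

lemma pathGraph_adj (m a b : ℕ) :
    (pathGraph m).Adj a b ↔
      (b = a + 1 ∧ 1 ≤ a ∧ b ≤ m) ∨ (a = b + 1 ∧ 1 ≤ b ∧ a ≤ m) := by
  simp only [pathGraph, SimpleGraph.fromRel_adj]
  constructor
  · rintro ⟨-, h⟩; exact h
  · rintro h; exact ⟨by omega, h⟩

lemma isLeaf_iff (m : ℕ) (hm : 2 ≤ m) (v : ℕ) :
    IsLeaf (pathGraph m) v ↔ v = 1 ∨ v = m := by
  constructor
  · rintro ⟨w, hw, huniq⟩
    by_contra h
    push_neg at h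
    rw [pathGraph_adj] at hw
    have hv1 : 1 ≤ v := by omega
    have hvm : v ≤ m := by omega
    have h1 : (pathGraph m).Adj v (v + 1) := by rw [pathGraph_adj]; left; omega
    have h2 : (pathGraph m).Adj v (v - 1) := by rw [pathGraph_adj]; right; omega
    have := huniq _ h1
    have := huniq _ h2
    omega
  · rintro (rfl | rfl)
    · refine ⟨2, ?_, ?_⟩
      · show (pathGraph m).Adj 1 2
        rw [pathGraph_adj]; left; omega
      · intro w hw; rw [pathGraph_adj] at hw; omega
    · refine ⟨v - 1, ?_, ?_⟩
      · show (pathGraph v).Adj v (v - 1)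
        rw [pathGraph_adj]; right; omega
      · intro w hw; rw [pathGraph_adj] at hw; omega

/-- Every vertex on a walk is positive, or is the final endpoint. -/
lemma walk_support_pos (m : ℕ) {a b : ℕ} (p : (pathGraph m).Walk a b) :
    ∀ x ∈ p.support, 1 ≤ x ∨ x = b := by
  induction p with
  | nil => intro x hx; simp at hx; omega
  | cons h q ih =>
    intro x hx
    rw [SimpleGraph.Walk.support_cons] at hx
    rcases List.mem_cons.mp hx with rfl | hx
    · rw [pathGraph_adj] at h; omega
    · exact ih x hx

/-- Any simple path from `v` to `m` whose vertices are all `≥ v` has support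
`[v, v+1, ..., m]`. -/
lemma path_support_eq (m : ℕ) : ∀ {v b : ℕ} (p : (pathGraph m).Walk v b),
    1 ≤ v → p.IsPath → (∀ x ∈ p.support, v ≤ x) →
    p.support = List.range' v (b + 1 - v) := by
  intro v b p
  induction p with
  | @nil v =>
    intro h1 _ _
    have : v + 1 - v = 1 := by omega
    rw [this]
    rfl
  | @cons u c b h q ih =>
    intro h1 hp hge
    have hub : u ≤ b := hge b (SimpleGraph.Walk.end_mem_support _)
    have hc : c = u + 1 ∧ c ≤ m := by
      rw [pathGraph_adj] at h
      rcases h with h | h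
      · omega
      · exfalso
        have := hge c (by simp)
        omega
    have hpq : q.IsPath := hp.of_cons
    have hnot : u ∉ q.support := by
      have := hp.support_nodup
      rw [SimpleGraph.Walk.support_cons] at this
      exact (List.nodup_cons.mp this).1
    have hge' : ∀ x ∈ q.support, u + 1 ≤ x := by
      intro x hx
      have := hge x (by rw [SimpleGraph.Walk.support_cons]; exact List.mem_cons_of_mem _ hx)
      rcases Nat.lt_or_ge u x with h' | h'
      · omega
      · exfalso; have : x = u := by omega
        subst this; exact hnot hx
    have := ih (hc.1 ▸ (by omega)) hpq (hc.1 ▸ hge')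
    rw [SimpleGraph.Walk.support_cons, this, hc.1]
    have hmm : b + 1 - u = (b + 1 - (u + 1)) + 1 := by omega
    rw [hmm]
    rfl

/-- Existence of the monotone path from `i` to `m`. -/
lemma exists_path (m : ℕ) : ∀ n i, 1 ≤ i → i + n = m →
    ∃ p : (pathGraph m).Walk i m, p.IsPath ∧ p.support = List.range' i (n + 1) := by
  intro n
  induction n with
  | zero =>
    intro i h1 h2
    subst h2
    refine ⟨(SimpleGraph.Walk.nil.copy rfl (by omega)), ?_, ?_⟩ <;> simp [List.range']
  | succ n ih =>
    intro i h1 h2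
    have hadj : (pathGraph m).Adj i (i + 1) := by rw [pathGraph_adj]; left; omega
    obtain ⟨q, hq, hsupp⟩ := ih (i + 1) (by omega) (by omega)
    refine ⟨SimpleGraph.Walk.cons hadj q, ?_, ?_⟩
    · rw [SimpleGraph.Walk.cons_isPath_iff]
      refine ⟨hq, ?_⟩
      rw [hsupp]
      intro hmem
      rw [List.mem_range'_1] at hmem
      omega
    · rw [SimpleGraph.Walk.support_cons, hsupp]
      have : List.range' i (n + 1 + 1) = i :: List.range' (i + 1) (n + 1) := rfl
      rw [this]

/-- For a string `T` with `t` vertices and `t ≥ k - 1`, the `k`-fold disconnecting complex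
`D_k(T)` (on the `t+2` vertices of `T̂`, a path) is the complex `δ_{(k+1,1^{t+2-k})}`:
`σ` is a face iff some `k` consecutive vertices `{i,...,i+k-1}`, `1 ≤ i ≤ t-k+3`, all
avoid `σ`. -/
theorem stmt15 (t k : ℕ) (hk : 0 < k) (ht : k - 1 ≤ t) (σ : Finset ℕ)
    (hσ : σ ⊆ Finset.Icc 1 (t + 2)) :
    (∀ a b : ℕ, IsLeaf (pathGraph (t + 2)) a → IsLeaf (pathGraph (t + 2)) b → a ≠ b →
      ∀ p : (pathGraph (t + 2)).Walk a b, p.IsPath →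
        ∃ l₁ bl l₂, p.support = l₁ ++ bl ++ l₂ ∧ bl.length = k ∧ ∀ x ∈ bl, x ∉ σ) ↔
    ∃ i ∈ Finset.Icc 1 (t + 3 - k), ∀ j ∈ Finset.Ico i (i + k), j ∉ σ := by
  set m := t + 2 with hm
  have hm2 : 2 ≤ m := by omega
  have hkm : k ≤ m := by omega
  constructor
  · intro H
    obtain ⟨p, hp, hsupp⟩ := exists_path m (m - 1) 1 le_rfl (by omega)
    have hsupp : p.support = List.range' 1 m := by rw [hsupp, show m - 1 + 1 = m from by omega]
    obtain ⟨l₁, bl, l₂, heq, hlen, havoid⟩ :=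
      H 1 m ((isLeaf_iff m hm2 1).mpr (Or.inl rfl)) ((isLeaf_iff m hm2 m).mpr (Or.inr rfl))
        (by omega) p hp
    rw [hsupp] at heq
    have hlentot : m = l₁.length + k + l₂.length := by
      have hL := congrArg List.length heq
      simp [hlen] at hL
      omega
    refine ⟨l₁.length + 1, ?_, ?_⟩
    · rw [Finset.mem_Icc]; omega
    · intro j hj
      rw [Finset.mem_Ico] at hj
      set n := j - (l₁.length + 1) with hn
      have hnk : n < k := by omega
      have hbl : j ∈ bl := by
        have heq' : List.range' 1 m = l₁ ++ (bl ++ l₂) := by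
          rw [heq, List.append_assoc]
        have hlt : l₁.length + n < (List.range' 1 m).length := by
          simp only [List.length_range']; omega
        have h1 : (List.range' 1 m)[l₁.length + n]'hlt = 1 + (l₁.length + n) := by
          simp
        have h0 := List.getElem_of_eq heq' hlt
        rw [List.getElem_append_right (by omega)] at h0
        rw [List.getElem_append_left (show l₁.length + n - l₁.length < bl.length by omega)] at h0
        have h3 : bl[l₁.length + n - l₁.length]'(by omega) = j := by
          rw [← h0, h1]; omega
        rw [← h3]
        exact List.getElem_mem _
      exact havoid j hbl
  · rintro ⟨i, hi, havoid⟩ a b ha hb hab p hp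
    rw [Finset.mem_Icc] at hi
    have hik : i + k ≤ m + 1 := by omega
    have hdecomp : List.range' 1 m =
        List.range' 1 (i - 1) ++ List.range' i k ++ List.range' (i + k) (m + 1 - i - k) := by
      have e1 := List.range'_append_1 (s := i) (m := k) (n := m + 1 - i - k)
      rw [show k + (m + 1 - i - k) = m + 1 - i from by omega] at e1
      have e2 := List.range'_append_1 (s := 1) (m := i - 1) (n := m + 1 - i)
      rw [show 1 + (i - 1) = i from by omega,
        show i - 1 + (m + 1 - i) = m from by omega] at e2
      rw [List.append_assoc, e1, e2]
    have hmem : ∀ x ∈ List.range' i k, x ∉ σ := by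
      intro x hx
      rw [List.mem_range'_1] at hx
      exact havoid x (Finset.mem_Ico.mpr hx)
    rw [isLeaf_iff m hm2] at ha hb
    have key : ∀ (q : (pathGraph m).Walk 1 m), q.IsPath →
        q.support = List.range' 1 m := by
      intro q hq
      have hpos : ∀ x ∈ q.support, 1 ≤ x := by
        intro x hx
        rcases walk_support_pos m q x hx with h | rfl
        · exact h
        · omega
      have := path_support_eq m q le_rfl hq hpos
      rw [this, show m + 1 - 1 = m from by omega]
    rcases ha with rfl | rfl
    · rcases hb with rfl | rfl
      · exact absurd rfl hab
      · refine ⟨List.range' 1 (i - 1), List.range' i k,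
          List.range' (i + k) (m + 1 - i - k), ?_, by simp, hmem⟩
        rw [key p hp, hdecomp]
    · rcases hb with rfl | rfl
      · have hrev := key p.reverse hp.reverse
        have hsup : p.support = (List.range' 1 m).reverse := by
          rw [← hrev, SimpleGraph.Walk.support_reverse, List.reverse_reverse]
        refine ⟨(List.range' (i + k) (m + 1 - i - k)).reverse, (List.range' i k).reverse,
          (List.range' 1 (i - 1)).reverse, ?_, by simp, by simpa using hmem⟩
        rw [hsup, hdecomp, List.reverse_append, List.reverse_append, ← List.append_assoc]
      · exact absurd rfl hab
end
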